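/- arXiv:2009.08533 — 5 statements merged into one kernel-verified Lean document; each statement's English description precedes it below -/
import Mathlib

section
/- Let φ : Δ → ℝ be exponentially concave and bounded (m ≤ φ ≤ M on Δ for some constants m, M ∈ ℝ). Let c : Δ → ℝ^{d×d} be a continuous field of symmetric positive semidefinite matrices and p : Δ → (0,∞) measurable with ∫_Δ |c_{ij}(x)| / (x^i x^j) · p(x) dx < ∞ for all i, j. Then for every ε > 0 there exist finitely many vectors w_1,…,w_n ∈ ℝ^d with strictly positive coordinates such that the function h(x) := min_{1≤k≤n} log(w_kᵀ x) satisfies ∫_Δ (∇h − ∇φ)(x)ᵀ c(x) (∇h − ∇φ)(x) p(x) dx < ε, where ∇h and ∇φ denote the gradients of h and φ, defined Lebesgue-almost everywhere on Δ since both functions are (exponentially) concave. -/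
open scoped BigOperators Topology
open MeasureTheory

/-- The open unit simplex in `ℝ^d`. -/
def openSimplex (d : ℕ) : Set (Fin d → ℝ) :=
  {x | (∀ i, 0 < x i) ∧ ∑ i, x i = 1}

/-- A function `φ` on the open simplex is exponentially concave if `e^φ` is concave there. -/
def ExpConcave {d : ℕ} (φ : (Fin d → ℝ) → ℝ) : Prop :=
  ConcaveOn ℝ (openSimplex d) (fun x => Real.exp (φ x))

/-- The superdifferential of `φ` at `x` (relative to the open simplex). -/
def superdiff {d : ℕ} (φ : (Fin d → ℝ) → ℝ) (x : Fin d → ℝ) : Set (Fin d → ℝ) :=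
  {y | ∀ q ∈ openSimplex d, φ q ≤ φ x + ∑ k, y k * (q k - x k)}

/-- `x ↦ min_{1 ≤ k ≤ n} log (w_kᵀ x)`. -/
noncomputable def minLogAffine {d n : ℕ} (w : Fin (n + 1) → Fin d → ℝ)
    (x : Fin d → ℝ) : ℝ :=
  Finset.univ.inf' Finset.univ_nonempty (fun k => Real.log (∑ i, w k i * x i))

/-- The `(d-1)`-dimensional Lebesgue measure on the hyperplane `{∑ xᶦ = 1}`. -/
noncomputable def simplexMeasure (d : ℕ) : Measure (Fin d → ℝ) :=
  Measure.map
    (fun y : Fin (d - 1) → ℝ => fun i : Fin d =>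
      if h : (i : ℕ) < d - 1 then y ⟨(i : ℕ), h⟩ else 1 - ∑ j, y j)
    volume


section Aux
open scoped Topology
open Filter

section General
variable {E : Type*} [NormedAddCommGroup E] [NormedSpace ℝ E]

/-- local Rademacher: a locally Lipschitz function on an open set is a.e. differentiable there -/
lemma ae_differentiableAt_of_locallyLipschitzOn [MeasurableSpace E] [BorelSpace E]
    [FiniteDimensional ℝ E] [SecondCountableTopology E]
    (μ : Measure E) [μ.IsAddHaarMeasure] {U : Set E} (hU : IsOpen U)
    {f : E → ℝ} (hf : LocallyLipschitzOn U f) :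
    ∀ᵐ y ∂μ, y ∈ U → DifferentiableAt ℝ f y := by
  have h : ∀ x : U, ∃ r : ℝ, 0 < r ∧ ∃ K, LipschitzOnWith K f (Metric.ball (x : E) r) := by
    rintro ⟨x, hx⟩
    obtain ⟨K, t, ht, hK⟩ := hf hx
    rw [hU.nhdsWithin_eq hx] at ht
    obtain ⟨r, hr, hball⟩ := Metric.mem_nhds_iff.1 ht
    exact ⟨r, hr, K, hK.mono hball⟩
  choose r hr K hK using h
  obtain ⟨Tset, hTc, hTu⟩ :=
    TopologicalSpace.isOpen_iUnion_countable (fun x : U => Metric.ball (x : E) (r x))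
      (fun x => Metric.isOpen_ball)
  have hae : ∀ x : U, ∀ᵐ y ∂μ, y ∈ Metric.ball (x : E) (r x) → DifferentiableAt ℝ f y := by
    intro x
    filter_upwards [(hK x).ae_differentiableWithinAt_of_mem (μ := μ)] with y hy hmem
    exact (hy hmem).differentiableAt (Metric.isOpen_ball.mem_nhds hmem)
  have hae2 : ∀ᵐ y ∂μ, ∀ x ∈ Tset, y ∈ Metric.ball (x : E) (r x) → DifferentiableAt ℝ f y :=
    (ae_ball_iff hTc).2 fun x _ => hae x
  filter_upwards [hae2] with y hy hyU
  have : y ∈ ⋃ x : U, Metric.ball (x : E) (r x) :=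
    Set.mem_iUnion.2 ⟨⟨y, hyU⟩, Metric.mem_ball_self (hr ⟨y, hyU⟩)⟩
  rw [← hTu] at this
  obtain ⟨x, hx, hmem⟩ := Set.mem_iUnion₂.1 this
  exact hy x hx hmem

/-- existence of supergradients for continuous concave functions on open sets -/
lemma exists_chart_supergradient {U : Set E} {f : E → ℝ}
    (hU : IsOpen U) (hf : ConcaveOn ℝ U f) (hcont : ContinuousOn f U)
    {y : E} (hy : y ∈ U) :
    ∃ L : E →L[ℝ] ℝ, ∀ z ∈ U, f z ≤ f y + L (z - y) := by
  set K : Set (E × ℝ) := {p | p.1 ∈ U ∧ p.2 < f p.1} with hKdef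
  have hopen : IsOpen K := by
    have h1 : IsOpen {p : E × ℝ | p.1 ∈ U} := hU.preimage continuous_fst
    have h2 : ContinuousOn (fun p : E × ℝ => f p.1 - p.2) {p | p.1 ∈ U} :=
      (hcont.comp continuous_fst.continuousOn fun p hp => hp).sub continuous_snd.continuousOn
    have : K = {p : E × ℝ | p.1 ∈ U} ∩ (fun p : E × ℝ => f p.1 - p.2) ⁻¹' (Set.Ioi 0) := by
      ext p; simp [hKdef, sub_pos]
    rw [this]
    exact h2.isOpen_inter_preimage h1 isOpen_Ioi
  have hconv : Convex ℝ K := by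
    rintro ⟨p1, p2⟩ ⟨hp1, hp2⟩ ⟨q1, q2⟩ ⟨hq1, hq2⟩ a b ha hb hab
    refine ⟨hf.1 hp1 hq1 ha hb hab, ?_⟩
    have hcc := hf.2 hp1 hq1 ha hb hab
    simp only [Prod.fst, Prod.snd, smul_eq_mul, Prod.mk_add_mk, Prod.smul_mk] at *
    have : a * p2 + b * q2 < a * f p1 + b * f q1 := by
      rcases lt_or_eq_of_le ha with h | h
      · have h1 : a * p2 < a * f p1 := by nlinarith
        have h2 : b * q2 ≤ b * f q1 := by nlinarith
        linarith
      · have hb1 : b = 1 := by linarith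
        have ha0 : a = 0 := h.symm
        simp [ha0, hb1] at *
        linarith
    calc a • p2 + b • q2 < a * f p1 + b * f q1 := by simpa using this
      _ ≤ f (a • p1 + b • q1) := hcc
  have hnm : ((y, f y) : E × ℝ) ∉ K := fun h => lt_irrefl _ h.2
  obtain ⟨Λ, hΛ⟩ := geometric_hahn_banach_open_point hconv hopen hnm
  set c : ℝ := Λ (0, 1) with hc
  have hdecomp : ∀ (z : E) (t : ℝ), Λ (z, t) = Λ (z, 0) + t * c := by
    intro z t
    have : ((z, t) : E × ℝ) = (z, 0) + t • (0, 1) := by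
      simp [Prod.ext_iff]
    rw [this, map_add, Λ.map_smul]
    simp [hc, mul_comm]
  have hcpos : 0 < c := by
    have h1 := hΛ (y, f y - 1) ⟨hy, show f y - 1 < f y by linarith⟩
    rw [hdecomp y (f y - 1), hdecomp y (f y)] at h1
    nlinarith
  refine ⟨-(c⁻¹) • (Λ.comp (ContinuousLinearMap.inl ℝ E ℝ)), fun z hz => ?_⟩
  have key : c * f z ≤ Λ (y, 0) + f y * c - Λ (z, 0) := by
    by_contra hcon
    push_neg at hcon
    set X := Λ (y, 0) + f y * c - Λ (z, 0) with hX
    have hXc : X / c < f z := by rw [div_lt_iff₀ hcpos]; linarith [hcon]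
    set t : ℝ := (X / c + f z) / 2 with ht
    have h1 : t < f z := by rw [ht]; linarith
    have h2 : X / c < t := by rw [ht]; linarith
    have h3 := hΛ (z, t) ⟨hz, h1⟩
    rw [hdecomp z t, hdecomp y (f y)] at h3
    have h4 : X < t * c := by
      rw [div_lt_iff₀ hcpos] at h2; linarith
    simp only [hX] at h4
    linarith
  have hL : (-(c⁻¹) • (Λ.comp (ContinuousLinearMap.inl ℝ E ℝ))) (z - y)
      = -(c⁻¹) * (Λ (z, 0) - Λ (y, 0)) := by
    have : ((z - y, 0) : E × ℝ) = (z, 0) - (y, 0) := by simp [Prod.ext_iff]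
    simp only [ContinuousLinearMap.smul_apply, ContinuousLinearMap.comp_apply,
      ContinuousLinearMap.inl_apply, smul_eq_mul]
    rw [this, map_sub]
  rw [hL]
  rw [mul_comm] at key
  have := (le_div_iff₀ hcpos).2 key
  have hexp : (Λ (y, 0) + f y * c - Λ (z, 0)) / c = f y + -(c⁻¹) * (Λ (z, 0) - Λ (y, 0)) := by
    field_simp
    ring
  linarith [hexp ▸ this]

/-- at a differentiability point, the derivative of a concave function is a supergradient -/
lemma supergrad_of_differentiableAt {U : Set E} {f : E → ℝ}
    (hU : IsOpen U) (hf : ConcaveOn ℝ U f) {y : E} (hy : y ∈ U)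
    (hd : DifferentiableAt ℝ f y) :
    ∀ z ∈ U, f z ≤ f y + fderiv ℝ f y (z - y) := by
  intro z hz
  have hinner : HasDerivAt (fun t : ℝ => y + t • (z - y)) (z - y) 0 := by
    have h1 : HasDerivAt (fun t : ℝ => t • (z - y)) ((1 : ℝ) • (z - y)) 0 :=
      (hasDerivAt_id (0 : ℝ)).smul_const (z - y)
    have h2 := h1.const_add y
    rwa [one_smul] at h2
  have hd' : HasFDerivAt f (fderiv ℝ f y) (y + (0:ℝ) • (z - y)) := by
    simpa using hd.hasFDerivAt
  have hψ : HasDerivAt (fun t : ℝ => f (y + t • (z - y))) (fderiv ℝ f y (z - y)) 0 := by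
    exact hd'.comp_hasDerivAt (0 : ℝ) hinner
  have hslope := hasDerivAt_iff_tendsto_slope.1 hψ
  have hslope' : Filter.Tendsto (slope (fun t : ℝ => f (y + t • (z - y))) 0) (𝓝[>] 0)
      (𝓝 (fderiv ℝ f y (z - y))) :=
    hslope.mono_left (nhdsWithin_mono 0 fun t ht => ne_of_gt ht)
  have hev : ∀ᶠ t in 𝓝[>] (0 : ℝ), f z - f y ≤ slope (fun t : ℝ => f (y + t • (z - y))) 0 t := by
    filter_upwards [Ioc_mem_nhdsGT_of_mem (Set.mem_Ico.2 ⟨le_refl (0:ℝ), zero_lt_one⟩)]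
      with t ht
    obtain ⟨ht0, ht1⟩ := ht
    have hcomb : y + t • (z - y) = (1 - t) • y + t • z := by
      rw [sub_smul, smul_sub]; module
    have hconc := hf.2 hy hz (by linarith : (0:ℝ) ≤ 1 - t) ht0.le (by ring)
    rw [← hcomb] at hconc
    rw [slope_def_field, sub_zero]
    rw [le_div_iff₀ ht0]
    simp only [smul_eq_mul, zero_smul, add_zero] at *
    nlinarith [hconc]
  linarith [ge_of_tendsto hslope' hev]

/-- supergradients of a pointwise-converging sequence converge to the derivative of the limit -/
lemma tendsto_supergrad_coeff {U : Set E} (hU : IsOpen U)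
    {f : ℕ → E → ℝ} {F : E → ℝ} {y : E} (hy : y ∈ U)
    (hconv : ∀ z ∈ U, Tendsto (fun n => f n z) atTop (𝓝 (F z)))
    (hF : DifferentiableAt ℝ F y)
    {g : ℕ → ℝ} {b : E}
    (hsg : ∀ n, ∀ t : ℝ, f n (y + t • b) ≤ f n y + t * g n) :
    Tendsto g atTop (𝓝 (fderiv ℝ F y b)) := by
  set G := fderiv ℝ F y b with hG
  have hinner : HasDerivAt (fun t : ℝ => y + t • b) b 0 := by
    have h1 : HasDerivAt (fun t : ℝ => t • b) ((1 : ℝ) • b) 0 :=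
      (hasDerivAt_id (0 : ℝ)).smul_const b
    have h2 := h1.const_add y
    rwa [one_smul] at h2
  have hd' : HasFDerivAt F (fderiv ℝ F y) (y + (0:ℝ) • b) := by
    simpa using hF.hasFDerivAt
  have hψ : HasDerivAt (fun t : ℝ => F (y + t • b)) G 0 := by
    exact hd'.comp_hasDerivAt (0 : ℝ) hinner
  have hslope := hasDerivAt_iff_tendsto_slope.1 hψ
  have hmemU : ∀ᶠ t in 𝓝 (0 : ℝ), y + t • b ∈ U := by
    have hcont : Continuous (fun t : ℝ => y + t • b) := by continuity
    exact hcont.continuousAt (x := 0) (hU.mem_nhds (by simpa using hy))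
  rw [tendsto_order]
  constructor
  · intro a ha
    have hs : Tendsto (slope (fun t : ℝ => F (y + t • b)) 0) (𝓝[>] 0) (𝓝 G) :=
      hslope.mono_left (nhdsWithin_mono 0 fun t ht => ne_of_gt ht)
    have h1 : ∀ᶠ t in 𝓝[>] (0:ℝ),
        (a < slope (fun t : ℝ => F (y + t • b)) 0 t ∧ y + t • b ∈ U) ∧ 0 < t :=
      ((hs.eventually (eventually_gt_nhds ha)).and
        (eventually_nhdsWithin_of_eventually_nhds hmemU)).and self_mem_nhdsWithin
    obtain ⟨t, ⟨hst, hmemt⟩, htpos⟩ := h1.exists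
    rw [slope_def_field, sub_zero, lt_div_iff₀ htpos] at hst
    simp only [zero_smul, add_zero] at hst
    have hconv_t : Tendsto (fun n => f n (y + t • b) - f n y) atTop
        (𝓝 (F (y + t • b) - F y)) := (hconv _ hmemt).sub (hconv y hy)
    have hev : ∀ᶠ n in atTop, a * t < f n (y + t • b) - f n y :=
      hconv_t.eventually (eventually_gt_nhds hst)
    filter_upwards [hev] with n hn
    have h3 := hsg n t
    exact lt_of_mul_lt_mul_right (by linarith : a * t < g n * t) htpos.le
  · intro a ha
    have hs : Tendsto (slope (fun t : ℝ => F (y + t • b)) 0) (𝓝[<] 0) (𝓝 G) :=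
      hslope.mono_left (nhdsWithin_mono 0 fun t ht => ne_of_lt ht)
    have h1 : ∀ᶠ t in 𝓝[<] (0:ℝ),
        (slope (fun t : ℝ => F (y + t • b)) 0 t < a ∧ y + t • b ∈ U) ∧ t < 0 :=
      ((hs.eventually (eventually_lt_nhds ha)).and
        (eventually_nhdsWithin_of_eventually_nhds hmemU)).and self_mem_nhdsWithin
    obtain ⟨t, ⟨hst, hmemt⟩, htneg⟩ := h1.exists
    rw [slope_def_field, sub_zero, div_lt_iff_of_neg htneg] at hst
    simp only [zero_smul, add_zero] at hst
    have hconv_t : Tendsto (fun n => f n (y + t • b) - f n y) atTop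
        (𝓝 (F (y + t • b) - F y)) := (hconv _ hmemt).sub (hconv y hy)
    have hev : ∀ᶠ n in atTop, a * t < f n (y + t • b) - f n y :=
      hconv_t.eventually (eventually_gt_nhds hst)
    filter_upwards [hev] with n hn
    have h3 := hsg n t
    have h4 : a * t < t * g n := by linarith
    rw [mul_comm t (g n)] at h4
    exact lt_of_mul_lt_mul_right (by linarith : g n * (-t) < a * (-t)) (by linarith)

end General


namespace S9
variable {e : ℕ}

/-- chart map -/
def T (e : ℕ) (y : Fin e → ℝ) : Fin (e+1) → ℝ :=
  fun i => if h : (i : ℕ) < e then y ⟨(i : ℕ), h⟩ else 1 - ∑ j, y j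

/-- inverse chart -/
def Sc (e : ℕ) (x : Fin (e+1) → ℝ) : Fin e → ℝ := fun j => x (Fin.castSucc j)

lemma T_castSucc (y : Fin e → ℝ) (j : Fin e) : T e y (Fin.castSucc j) = y j := by
  simp [T, Fin.is_lt]

lemma T_last (y : Fin e → ℝ) : T e y (Fin.last e) = 1 - ∑ j, y j := by
  simp [T]

lemma Sc_T (y : Fin e → ℝ) : Sc e (T e y) = y := by
  funext j; simp [Sc, T_castSucc]

lemma sum_T (y : Fin e → ℝ) : ∑ i, T e y i = 1 := by
  rw [Fin.sum_univ_castSucc]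
  simp [T_castSucc, T_last]

lemma T_Sc {x : Fin (e+1) → ℝ} (hx : ∑ i, x i = 1) : T e (Sc e x) = x := by
  funext i
  rcases Fin.eq_castSucc_or_eq_last i with ⟨j, rfl⟩ | rfl
  · rw [T_castSucc]; rfl
  · rw [T_last]
    have := hx
    rw [Fin.sum_univ_castSucc] at this
    have h2 : ∑ j, Sc e x j = ∑ j : Fin e, x (Fin.castSucc j) := rfl
    rw [h2]; linarith

lemma continuous_T : Continuous (T e) := by
  apply continuous_pi
  intro i
  by_cases h : (i:ℕ) < e
  · simpa [T, h] using continuous_apply (⟨(i:ℕ), h⟩ : Fin e)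
  · have hc : Continuous fun y : Fin e → ℝ => 1 - ∑ j, y j := by fun_prop
    simpa [T, h] using hc

lemma continuous_Sc : Continuous (Sc e) := by
  apply continuous_pi; intro j; exact continuous_apply _

lemma T_affine (y z : Fin e → ℝ) (a b : ℝ) (hab : a + b = 1) :
    T e (a • y + b • z) = a • T e y + b • T e z := by
  funext i
  simp only [T, Pi.add_apply, Pi.smul_apply, smul_eq_mul]
  split_ifs with h
  · ring
  · rw [Finset.sum_add_distrib, ← Finset.mul_sum, ← Finset.mul_sum]
    nlinarith [hab]

/-- the chart domain -/
def U (e : ℕ) : Set (Fin e → ℝ) := T e ⁻¹' (openSimplex (e+1))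

lemma isOpen_U : IsOpen (U e) := by
  have : openSimplex (e+1) = (⋂ i, {x : Fin (e+1) → ℝ | 0 < x i}) ∩ {x | ∑ i, x i = 1} := by
    ext x; simp [openSimplex, Set.mem_iInter]
  have h1 : IsOpen {y : Fin e → ℝ | ∀ i, 0 < T e y i} := by
    have : {y : Fin e → ℝ | ∀ i, 0 < T e y i} = ⋂ i, {y | 0 < T e y i} := by
      ext y; simp [Set.mem_iInter]
    rw [this]
    exact isOpen_iInter_of_finite fun i =>
      isOpen_lt continuous_const ((continuous_apply i).comp continuous_T)
  have : U e = {y : Fin e → ℝ | ∀ i, 0 < T e y i} := by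
    ext y
    simp only [U, Set.mem_preimage, openSimplex, Set.mem_setOf_eq]
    exact ⟨fun h => h.1, fun h => ⟨h, sum_T y⟩⟩
  rw [this]; exact h1

lemma convex_openSimplex : Convex ℝ (openSimplex (e+1)) := by
  intro x hx y hy a b ha hb hab
  constructor
  · intro i
    simp only [Pi.add_apply, Pi.smul_apply, smul_eq_mul]
    rcases eq_or_lt_of_le ha with h | h
    · have hb1 : b = 1 := by linarith
      have h2 := hy.1 i
      have h3 : a * x i = 0 := by rw [← h]; ring
      nlinarith
    · have h1 : 0 < a * x i := mul_pos h (hx.1 i)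
      have h2 : 0 ≤ b * y i := mul_nonneg hb (le_of_lt (hy.1 i))
      linarith
  · simp only [Pi.add_apply, Pi.smul_apply, smul_eq_mul]
    rw [Finset.sum_add_distrib, ← Finset.mul_sum, ← Finset.mul_sum, hx.2, hy.2]
    linarith

lemma convex_U : Convex ℝ (U e) := by
  intro y hy z hz a b ha hb hab
  have : T e (a • y + b • z) = a • T e y + b • T e z := T_affine y z a b hab
  simp only [U, Set.mem_preimage] at *
  rw [this]
  exact convex_openSimplex hy hz ha hb hab


variable {e : ℕ}

lemma mem_U_of_mem {x : Fin (e+1) → ℝ} (hx : x ∈ openSimplex (e+1)) : Sc e x ∈ U e := by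
  simp only [U, Set.mem_preimage, T_Sc hx.2]; exact hx

def gvec (L : (Fin e → ℝ) →L[ℝ] ℝ) : Fin (e+1) → ℝ :=
  fun i => if h : (i : ℕ) < e then L (Pi.single (⟨(i : ℕ), h⟩ : Fin e) 1) else 0

lemma gvec_castSucc (L : (Fin e → ℝ) →L[ℝ] ℝ) (j : Fin e) :
    gvec L (Fin.castSucc j) = L (Pi.single j 1) := by
  have h : ((Fin.castSucc j : Fin (e+1)) : ℕ) < e := j.is_lt
  simp only [gvec, dif_pos h]
  congr 1

lemma gvec_last (L : (Fin e → ℝ) →L[ℝ] ℝ) : gvec L (Fin.last e) = 0 := by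
  simp [gvec]

lemma pi_eq_sum_single (v : Fin e → ℝ) : v = ∑ j, v j • (Pi.single j (1 : ℝ) : Fin e → ℝ) := by
  funext i
  rw [Finset.sum_apply]
  simp only [Pi.smul_apply, Pi.single_apply, smul_eq_mul]
  rw [Finset.sum_eq_single i]
  · simp
  · intro b _ hb; simp [Ne.symm hb]
  · simp

lemma clm_apply_eq_sum (L : (Fin e → ℝ) →L[ℝ] ℝ) (v : Fin e → ℝ) :
    L v = ∑ j, v j * L (Pi.single j 1) := by
  conv_lhs => rw [pi_eq_sum_single v]
  rw [map_sum]
  simp [smul_eq_mul]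

lemma gvec_pairing (L : (Fin e → ℝ) →L[ℝ] ℝ) (q x : Fin (e+1) → ℝ) :
    L (Sc e q - Sc e x) = ∑ i, gvec L i * (q i - x i) := by
  rw [clm_apply_eq_sum, Fin.sum_univ_castSucc]
  have hlast : gvec L (Fin.last e) = 0 := by simp [gvec]
  rw [hlast, zero_mul, add_zero]
  apply Finset.sum_congr rfl
  intro j _
  have h1 : gvec L (Fin.castSucc j) = L (Pi.single j 1) := by
    have h : ((Fin.castSucc j : Fin (e+1)) : ℕ) < e := j.is_lt
    simp only [gvec, dif_pos h]
    congr 1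
  have h2 : (Sc e q - Sc e x) j = q (Fin.castSucc j) - x (Fin.castSucc j) := rfl
  rw [h1, h2]
  ring

lemma chart_supergrad_transfer {f : (Fin (e+1) → ℝ) → ℝ} {x : Fin (e+1) → ℝ}
    (hx : x ∈ openSimplex (e+1)) (L : (Fin e → ℝ) →L[ℝ] ℝ)
    (hL : ∀ z ∈ U e, f (T e z) ≤ f (T e (Sc e x)) + L (z - Sc e x)) :
    ∀ q ∈ openSimplex (e+1), f q ≤ f x + ∑ i, gvec L i * (q i - x i) := by
  intro q hq
  have h1 := hL (Sc e q) (mem_U_of_mem hq)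
  rw [T_Sc hq.2, T_Sc hx.2, gvec_pairing] at h1
  exact h1

section Tangent
variable {Ψ : (Fin (e+1) → ℝ) → ℝ}

/-- the coefficients of the tangent affine plane of `Ψ` at `x` with supergradient `g` -/
def wvec (Ψ : (Fin (e+1) → ℝ) → ℝ) (x g : Fin (e+1) → ℝ) : Fin (e+1) → ℝ :=
  fun i => Ψ x + g i - ∑ j, g j * x j

lemma wvec_dot {x g : Fin (e+1) → ℝ} (q : Fin (e+1) → ℝ) (hq : ∑ i, q i = 1) :
    ∑ i, wvec Ψ x g i * q i = Ψ x + ∑ i, g i * (q i - x i) := by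
  simp only [wvec]
  rw [show ∀ G : ℝ, ∑ i, (Ψ x + g i - G) * q i
      = (Ψ x - G) * ∑ i, q i + ∑ i, g i * q i from fun G => by
    rw [Finset.mul_sum, ← Finset.sum_add_distrib]; apply Finset.sum_congr rfl; intros; ring]
  rw [hq, mul_one]
  have : ∑ i, g i * (q i - x i) = ∑ i, g i * q i - ∑ i, g i * x i := by
    rw [← Finset.sum_sub_distrib]; apply Finset.sum_congr rfl; intros; ring
  rw [this]; ring

lemma wvec_dot_self {x g : Fin (e+1) → ℝ} (hx : ∑ i, x i = 1) :
    ∑ i, wvec Ψ x g i * x i = Ψ x := by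
  rw [wvec_dot x hx]
  have : ∑ i, g i * (x i - x i) = 0 := by simp
  rw [this, add_zero]

lemma wvec_tangent_ge {x g : Fin (e+1) → ℝ} (hx : x ∈ openSimplex (e+1))
    (hg : ∀ q ∈ openSimplex (e+1), Ψ q ≤ Ψ x + ∑ i, g i * (q i - x i)) :
    ∀ q ∈ openSimplex (e+1), Ψ q ≤ ∑ i, wvec Ψ x g i * q i := by
  intro q hq
  rw [wvec_dot q hq.2]
  exact hg q hq

lemma wvec_ge {x g : Fin (e+1) → ℝ} {c : ℝ} (hx : x ∈ openSimplex (e+1))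
    (hg : ∀ q ∈ openSimplex (e+1), Ψ q ≤ Ψ x + ∑ i, g i * (q i - x i))
    (hΨc : ∀ q ∈ openSimplex (e+1), c ≤ Ψ q) (i : Fin (e+1)) :
    c ≤ wvec Ψ x g i := by
  set G := ∑ j, g j * x j with hG
  have key : ∀ t : ℝ, t ∈ Set.Ioo (0:ℝ) 1 → c ≤ Ψ x + t * (g i - G) := by
    intro t ht
    set q : Fin (e+1) → ℝ := fun j => (1 - t) * x j + t * (if j = i then 1 else 0) with hqdef
    have hqΔ : q ∈ openSimplex (e+1) := by
      constructor
      · intro j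
        have := hx.1 j
        by_cases hji : j = i
        · subst hji
          simp only [hqdef]
          simp only [if_true]
          nlinarith [ht.1, ht.2]
        · simp only [hqdef, if_neg hji]
          nlinarith [ht.1, ht.2]
      · simp only [hqdef]
        rw [Finset.sum_add_distrib, ← Finset.mul_sum, ← Finset.mul_sum, hx.2]
        rw [Finset.sum_ite_eq' Finset.univ i (fun _ => (1:ℝ))]
        simp
    have h1 := hg q hqΔ
    have h2 := hΨc q hqΔ
    have h3 : ∑ j, g j * (q j - x j) = t * (g i - G) := by
      have hstep : ∀ j, g j * (q j - x j) = t * ((if j = i then g j else 0) - g j * x j) := by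
        intro j; by_cases hji : j = i <;> simp only [hqdef, hji, if_pos, if_neg, ite_true,
          ite_false] <;> ring
      rw [Finset.sum_congr rfl (fun j _ => hstep j), ← Finset.mul_sum]
      congr 1
      rw [Finset.sum_sub_distrib]
      simp [hG]
    rw [h3] at h1
    linarith
  have hlim : Tendsto (fun t : ℝ => Ψ x + t * (g i - G)) (𝓝[<] 1) (𝓝 (Ψ x + 1 * (g i - G))) := by
    apply Tendsto.mono_left _ nhdsWithin_le_nhds
    exact (tendsto_const_nhds.add ((continuous_id.mul continuous_const).tendsto 1))
  have hev : ∀ᶠ t in 𝓝[<] (1:ℝ), c ≤ Ψ x + t * (g i - G) := by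
    filter_upwards [Ioo_mem_nhdsLT_of_mem (Set.mem_Ioc.2 ⟨zero_lt_one, le_refl (1:ℝ)⟩)]
      with t ht using key t ht
  have h5 := ge_of_tendsto hlim hev
  simp only [one_mul] at h5
  simp only [wvec]
  rw [← hG]
  linarith
end Tangent



variable {Ψ : (Fin (e+1) → ℝ) → ℝ}

lemma concaveOn_F (hφ : ConcaveOn ℝ (openSimplex (e+1)) Ψ) :
    ConcaveOn ℝ (U e) (fun y => Ψ (T e y)) := by
  refine ⟨convex_U, fun y hy z hz a b ha hb hab => ?_⟩
  have h := hφ.2 hy hz ha hb hab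
  rw [← T_affine y z a b hab] at h
  exact h

/-- the vector field `bvec b` describing the affine action of `T` in direction `b` -/
def bvec (b : Fin e → ℝ) : Fin (e+1) → ℝ :=
  fun i => if h : (i : ℕ) < e then b ⟨(i : ℕ), h⟩ else - ∑ j, b j

lemma T_add_smul (y : Fin e → ℝ) (t : ℝ) (b : Fin e → ℝ) (i : Fin (e+1)) :
    T e (y + t • b) i = T e y i + t * bvec b i := by
  simp only [T, bvec]
  split_ifs with h
  · simp [mul_comm]
  · have h2 : ∑ j, (y + t • b) j = ∑ j, y j + t * ∑ j, b j := by
      simp only [Pi.add_apply, Pi.smul_apply, smul_eq_mul]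
      rw [Finset.sum_add_distrib, ← Finset.mul_sum]
    rw [h2]; ring

lemma dot_add_smul (W : Fin (e+1) → ℝ) (y : Fin e → ℝ) (t : ℝ) (b : Fin e → ℝ) :
    ∑ i, W i * T e (y + t • b) i = (∑ i, W i * T e y i) + t * ∑ i, W i * bvec b i := by
  rw [Finset.mul_sum, ← Finset.sum_add_distrib]
  apply Finset.sum_congr rfl
  intro i _
  rw [T_add_smul]
  ring

lemma dot_bvec_single (W : Fin (e+1) → ℝ) (j : Fin e) :
    ∑ i, W i * bvec (Pi.single j 1) i = W (Fin.castSucc j) - W (Fin.last e) := by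
  rw [Fin.sum_univ_castSucc]
  have h1 : ∀ j' : Fin e, W (Fin.castSucc j') * bvec (Pi.single j 1) (Fin.castSucc j')
      = W (Fin.castSucc j') * (if j' = j then 1 else 0) := by
    intro j'
    congr 1
    have h : ((Fin.castSucc j' : Fin (e+1)) : ℕ) < e := j'.is_lt
    simp only [bvec, dif_pos h]
    have : (⟨((Fin.castSucc j' : Fin (e+1)) : ℕ), h⟩ : Fin e) = j' := by
      apply Fin.ext; rfl
    rw [this, Pi.single_apply]
  have h2 : bvec (Pi.single j 1) (Fin.last e) = -1 := by
    simp only [bvec]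
    rw [dif_neg (by simp)]
    rw [show ∑ j', Pi.single j (1:ℝ) j' = 1 by
      rw [Finset.sum_congr rfl (fun j' _ => Pi.single_apply j 1 j')]
      simp]
  rw [h2, Finset.sum_congr rfl (fun j' _ => h1 j')]
  have h3 : ∑ j', W (Fin.castSucc j') * (if j' = j then 1 else 0) = W (Fin.castSucc j) := by
    rw [Finset.sum_congr rfl (fun j' _ => by rw [mul_ite, mul_one, mul_zero])]
    rw [Finset.sum_ite_eq' Finset.univ j (fun j' => W (Fin.castSucc j'))]
    simp
  rw [h3]
  ring



variable {d : ℕ}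

lemma dot_pos {W x : Fin (d+1) → ℝ} (hW : ∀ i, 0 < W i) (hx : x ∈ openSimplex (d+1)) :
    0 < ∑ j, W j * x j :=
  Finset.sum_pos (fun j _ => mul_pos (hW j) (hx.1 j)) Finset.univ_nonempty

lemma coeff_bounds {W x : Fin (d+1) → ℝ} (hW : ∀ i, 0 < W i) (hx : x ∈ openSimplex (d+1))
    (i : Fin (d+1)) :
    0 < W i / (∑ j, W j * x j) ∧ W i / (∑ j, W j * x j) ≤ 1 / x i := by
  have hS := dot_pos hW hx
  constructor
  · exact div_pos (hW i) hS
  · rw [div_le_div_iff₀ hS (hx.1 i)]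
    have h1 : W i * x i ≤ ∑ j, W j * x j :=
      Finset.single_le_sum (fun j _ => (mul_pos (hW j) (hx.1 j)).le) (Finset.mem_univ i)
    linarith

/-- diff of coefficients bounded by `1 / x i` -/
lemma coeff_diff_bound {a b xi : ℝ} (hxi : 0 < xi) (ha : 0 < a) (ha' : a ≤ 1 / xi)
    (hb : 0 < b) (hb' : b ≤ 1 / xi) : |a - b| ≤ 1 / xi := by
  rw [abs_sub_le_iff]
  constructor <;> linarith

/-- main superdifferential lemma: normalized coefficients of a tangent hyperplane from above
in log coordinates -/
lemma superdiff_of_tangent {f : (Fin (d+1) → ℝ) → ℝ} {x : Fin (d+1) → ℝ}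
    (hx : x ∈ openSimplex (d+1)) {W : Fin (d+1) → ℝ} (hW : ∀ i, 0 < W i)
    (hle : ∀ q ∈ openSimplex (d+1), f q ≤ Real.log (∑ i, W i * q i))
    (heq : f x = Real.log (∑ i, W i * x i)) :
    (fun i => W i / (∑ j, W j * x j)) ∈ superdiff f x := by
  intro q hq
  set S := ∑ j, W j * x j with hS
  set Sq := ∑ j, W j * q j with hSq
  have hSpos : 0 < S := dot_pos hW hx
  have hSqpos : 0 < Sq := dot_pos hW hq
  have h1 : f q ≤ Real.log Sq := hle q hq
  have h2 : Real.log Sq - Real.log S ≤ Sq / S - 1 := by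
    rw [← Real.log_div hSqpos.ne' hSpos.ne']
    exact Real.log_le_sub_one_of_pos (div_pos hSqpos hSpos)
  have h3 : ∑ i, W i / S * (q i - x i) = Sq / S - 1 := by
    have : ∀ i, W i / S * (q i - x i) = (W i * q i - W i * x i) / S := by
      intro i; field_simp
    rw [Finset.sum_congr rfl (fun i _ => this i), ← Finset.sum_div, Finset.sum_sub_distrib]
    rw [← hSq, ← hS]
    field_simp
  rw [heq, h3]
  linarith

section MinAffine
variable {n : ℕ} (w : Fin (n+1) → Fin (d+1) → ℝ)

/-- dot products with the `w_k` -/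
def Adot (k : Fin (n+1)) (x : Fin (d+1) → ℝ) : ℝ := ∑ i, w k i * x i

lemma measurable_Adot (k : Fin (n+1)) : Measurable (Adot w k) :=
  Finset.measurable_sum _ fun i _ => (measurable_pi_apply i).const_mul _

lemma filter_nonempty (x : Fin (d+1) → ℝ) :
    (Finset.univ.filter (fun k => ∀ j, Adot w k x ≤ Adot w j x)).Nonempty := by
  obtain ⟨k, _, hk⟩ := Finset.exists_min_image Finset.univ (fun k => Adot w k x)
    Finset.univ_nonempty
  exact ⟨k, Finset.mem_filter.2 ⟨Finset.mem_univ k, fun j => hk j (Finset.mem_univ j)⟩⟩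

/-- canonical (first) minimizer -/
noncomputable def argmin (x : Fin (d+1) → ℝ) : Fin (n+1) :=
  (Finset.univ.filter (fun k => ∀ j, Adot w k x ≤ Adot w j x)).min' (filter_nonempty w x)

lemma argmin_spec (x : Fin (d+1) → ℝ) (j : Fin (n+1)) :
    Adot w (argmin w x) x ≤ Adot w j x := by
  have := Finset.min'_mem _ (filter_nonempty w x)
  rw [Finset.mem_filter] at this
  exact this.2 j

lemma argmin_eq_iff (x : Fin (d+1) → ℝ) (k : Fin (n+1)) :
    argmin w x = k ↔ (∀ j, Adot w k x ≤ Adot w j x) ∧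
      ∀ j, (∀ j', Adot w j x ≤ Adot w j' x) → k ≤ j := by
  constructor
  · rintro rfl
    refine ⟨argmin_spec w x, fun j hj => ?_⟩
    exact Finset.min'_le _ j (Finset.mem_filter.2 ⟨Finset.mem_univ j, hj⟩)
  · rintro ⟨h1, h2⟩
    apply le_antisymm
    · exact Finset.min'_le _ k (Finset.mem_filter.2 ⟨Finset.mem_univ k, h1⟩)
    · apply h2
      exact argmin_spec w x

lemma measurable_argmin : Measurable (argmin w) := by
  apply measurable_to_countable'
  intro k
  have hpre : argmin w ⁻¹' {k} = {x | argmin w x = k} := by ext x; simp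
  rw [hpre]
  have : {x | argmin w x = k} = ({x | ∀ j, Adot w k x ≤ Adot w j x} ∩
      ⋂ j, {x : Fin (d+1) → ℝ | (∀ j', Adot w j x ≤ Adot w j' x) → k ≤ j}) := by
    ext x
    simp only [Set.mem_setOf_eq, Set.mem_inter_iff, Set.mem_iInter]
    exact argmin_eq_iff w x k
  rw [this]
  apply MeasurableSet.inter
  · have : {x | ∀ j, Adot w k x ≤ Adot w j x}
        = ⋂ j, {x | Adot w k x ≤ Adot w j x} := by ext x; simp
    rw [this]
    exact MeasurableSet.iInter fun j => measurableSet_le (measurable_Adot w k)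
      (measurable_Adot w j)
  · refine MeasurableSet.iInter fun j => ?_
    by_cases hkj : k ≤ j
    · have : {x : Fin (d+1) → ℝ | (∀ j', Adot w j x ≤ Adot w j' x) → k ≤ j} = Set.univ := by
        ext x; simp [hkj]
      rw [this]; exact MeasurableSet.univ
    · have : {x : Fin (d+1) → ℝ | (∀ j', Adot w j x ≤ Adot w j' x) → k ≤ j}
          = {x | ∀ j', Adot w j x ≤ Adot w j' x}ᶜ := by
        ext x; simp only [Set.mem_setOf_eq, Set.mem_compl_iff]
        constructor
        · intro h hc; exact hkj (h hc)
        · intro h hc; exact absurd hc h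
      rw [this]
      apply MeasurableSet.compl
      have : {x : Fin (d+1) → ℝ | ∀ j', Adot w j x ≤ Adot w j' x}
          = ⋂ j', {x | Adot w j x ≤ Adot w j' x} := by ext x; simp
      rw [this]
      exact MeasurableSet.iInter fun j' => measurableSet_le (measurable_Adot w j)
        (measurable_Adot w j')

/-- the normalized minimal tangent selection -/
noncomputable def usel (x : Fin (d+1) → ℝ) : Fin (d+1) → ℝ :=
  fun i => w (argmin w x) i / Adot w (argmin w x) x

lemma measurable_usel : Measurable (usel w) := by
  apply measurable_pi_lambda
  intro i
  have heq : (fun x => usel w x i)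
      = fun x => ∑ k, if argmin w x = k then w k i / Adot w k x else 0 := by
    funext x
    rw [Finset.sum_ite_eq]
    simp [usel]
  rw [heq]
  apply Finset.measurable_sum
  intro k _
  apply Measurable.ite
  · exact (measurable_argmin w) (MeasurableSet.singleton k)
  · exact (measurable_Adot w k).const_div _
  · exact measurable_const

lemma minLogAffine_eq (hw : ∀ k i, 0 < w k i) {x : Fin (d+1) → ℝ}
    (hx : x ∈ openSimplex (d+1)) :
    minLogAffine w x = Real.log (Adot w (argmin w x) x) := by
  apply le_antisymm
  · exact Finset.inf'_le _ (Finset.mem_univ _)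
  · apply Finset.le_inf'
    intro k _
    have h1 : 0 < Adot w (argmin w x) x := dot_pos (hw _) hx
    exact Real.log_le_log h1 (argmin_spec w x k)

lemma usel_superdiff (hw : ∀ k i, 0 < w k i) {x : Fin (d+1) → ℝ}
    (hx : x ∈ openSimplex (d+1)) :
    usel w x ∈ superdiff (minLogAffine w) x := by
  have := superdiff_of_tangent (f := minLogAffine w) hx (hW := hw (argmin w x))
    (fun q hq => by
      rw [minLogAffine_eq w hw hq]
      have h1 : 0 < Adot w (argmin w q) q := dot_pos (hw _) hq
      exact Real.log_le_log h1 (argmin_spec w q (argmin w x)))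
    (minLogAffine_eq w hw hx)
  exact this

lemma usel_bounds (hw : ∀ k i, 0 < w k i) {x : Fin (d+1) → ℝ}
    (hx : x ∈ openSimplex (d+1)) (i : Fin (d+1)) :
    0 < usel w x i ∧ usel w x i ≤ 1 / x i :=
  coeff_bounds (hw _) hx i

end MinAffine


lemma Adot_argmin_eq {d n : ℕ} (w : Fin (n+1) → Fin (d+1) → ℝ) (x : Fin (d+1) → ℝ) :
    Finset.univ.inf' Finset.univ_nonempty (fun k => Adot w k x) = Adot w (argmin w x) x :=
  le_antisymm (Finset.inf'_le _ (Finset.mem_univ _))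
    (Finset.le_inf' _ _ fun k _ => argmin_spec w x k)

lemma coeff_dot_self {d : ℕ} {W x : Fin (d+1) → ℝ} (h : (∑ j, W j * x j) ≠ 0) :
    ∑ j, (W j / (∑ i, W i * x i)) * x j = 1 := by
  have : ∀ j, (W j / (∑ i, W i * x i)) * x j = (W j * x j) / (∑ i, W i * x i) := by
    intro j; ring
  rw [Finset.sum_congr rfl (fun j _ => this j), ← Finset.sum_div]
  exact div_self h

end S9
end Aux


namespace S9
open scoped Topology
open Filter

lemma tendsto_mval {e : ℕ} {Ψ : (Fin (e+1) → ℝ) → ℝ}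
    (hcont : ContinuousOn (fun y => Ψ (T e y)) (U e))
    {Mb : ℝ} (hMb : 0 < Mb)
    {Wt : ℕ → Fin (e+1) → ℝ} {xs : ℕ → Fin (e+1) → ℝ}
    (hxs : ∀ k, xs k ∈ openSimplex (e+1))
    (hWt_ge : ∀ k, ∀ q ∈ openSimplex (e+1), Ψ q ≤ ∑ i, Wt k i * q i)
    (hWt_self : ∀ k, ∑ i, Wt k i * xs k i = Ψ (xs k))
    (hWt_le : ∀ k i, Wt k i ≤ Mb / xs k i)
    (hWt_pos : ∀ k i, 0 < Wt k i)
    {qs : ℕ → Fin e → ℝ} (hqs : DenseRange qs)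
    (hxs_eq : ∀ k, qs k ∈ U e → xs k = T e (qs k))
    {z : Fin e → ℝ} (hz : z ∈ U e) :
    Filter.Tendsto (fun n => Finset.univ.inf' Finset.univ_nonempty
      (fun k : Fin (n+1) => ∑ i, Wt (k:ℕ) i * T e z i)) Filter.atTop (𝓝 (Ψ (T e z))) := by
  set x' : Fin (e+1) → ℝ := T e z with hx'def
  have hx'Δ : x' ∈ openSimplex (e+1) := hz
  -- lower bound
  have hlow : ∀ n, Ψ x' ≤ Finset.univ.inf' Finset.univ_nonempty
      (fun k : Fin (n+1) => ∑ i, Wt (k:ℕ) i * x' i) := fun n =>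
    Finset.le_inf' _ _ fun k _ => hWt_ge _ x' hx'Δ
  rw [Metric.tendsto_atTop]
  intro δ hδ
  -- the minimum of the coordinates of x'
  set η : ℝ := Finset.univ.inf' Finset.univ_nonempty (fun i => x' i) with hηdef
  have hη : 0 < η := by
    rw [hηdef, Finset.lt_inf'_iff]
    exact fun i _ => hx'Δ.1 i
  have hηle : ∀ i, η ≤ x' i := fun i => Finset.inf'_le _ (Finset.mem_univ i)
  set C : ℝ := (e+1 : ℝ) * (2 * Mb / η) with hCdef
  have hCpos : 0 < C := by
    have : (0:ℝ) < (e+1 : ℝ) := by positivity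
    have h2 : 0 < 2 * Mb / η := by positivity
    positivity
  -- eventual conditions near z
  have hev : ∀ᶠ ζ in 𝓝 z, ζ ∈ U e ∧ (∀ i, η/2 < T e ζ i) ∧
      (∀ i, |T e ζ i - x' i| ≤ δ/(4*C)) ∧ |Ψ (T e ζ) - Ψ x'| ≤ δ/4 := by
    have h1 : ∀ᶠ ζ in 𝓝 z, ζ ∈ U e := (isOpen_U).eventually_mem hz
    have h2 : ∀ᶠ ζ in 𝓝 z, ∀ i, η/2 < T e ζ i := by
      rw [eventually_all]
      intro i
      have hci : ContinuousAt (fun ζ => T e ζ i) z :=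
        ((continuous_apply i).comp continuous_T).continuousAt
      exact hci.eventually_const_lt (lt_of_lt_of_le (by linarith [hηle i, hη] : η/2 < x' i)
        (le_refl _))
    have h3 : ∀ᶠ ζ in 𝓝 z, ∀ i, |T e ζ i - x' i| ≤ δ/(4*C) := by
      rw [eventually_all]
      intro i
      have hci : ContinuousAt (fun ζ => T e ζ i) z :=
        ((continuous_apply i).comp continuous_T).continuousAt
      have hmem : Metric.closedBall (x' i) (δ/(4*C)) ∈ 𝓝 ((fun ζ => T e ζ i) z) :=
        Metric.closedBall_mem_nhds _ (by positivity)
      filter_upwards [hci.tendsto.eventually_mem hmem] with ζ hζ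
      simpa [Metric.mem_closedBall, Real.dist_eq] using hζ
    have h4 : ∀ᶠ ζ in 𝓝 z, |Ψ (T e ζ) - Ψ x'| ≤ δ/4 := by
      have hca : ContinuousAt (fun y => Ψ (T e y)) z :=
        hcont.continuousAt ((isOpen_U).mem_nhds hz)
      have hmem : Metric.closedBall (Ψ x') (δ/4) ∈ 𝓝 ((fun y => Ψ (T e y)) z) :=
        Metric.closedBall_mem_nhds _ (by positivity)
      filter_upwards [hca.tendsto.eventually_mem hmem] with ζ hζ
      simpa [Metric.mem_closedBall, Real.dist_eq] using hζ
    filter_upwards [h1, h2, h3, h4] with ζ e1 e2 e3 e4 using ⟨e1, e2, e3, e4⟩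
  obtain ⟨O, hOsub, hOopen, hzO⟩ := mem_nhds_iff.1 hev
  obtain ⟨K, hKO⟩ : ∃ K, qs K ∈ O := hqs.exists_mem_open hOopen ⟨z, hzO⟩
  obtain ⟨hKU, hKcoord, hKdist, hKval⟩ := hOsub hKO
  have hxsK : xs K = T e (qs K) := hxs_eq K hKU
  -- the tangent plane at `xs K` evaluated at `x'` is close to `Ψ x'`
  have hclose : ∑ i, Wt K i * x' i ≤ Ψ x' + δ/2 := by
    have h5 : ∑ i, Wt K i * x' i = Ψ (xs K) + ∑ i, Wt K i * (x' i - xs K i) := by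
      rw [← hWt_self K, ← Finset.sum_add_distrib]
      apply Finset.sum_congr rfl; intros; ring
    have h6 : ∑ i, Wt K i * (x' i - xs K i) ≤ δ/4 := by
      have hterm : ∀ i ∈ Finset.univ, Wt K i * (x' i - xs K i) ≤ (2 * Mb / η) * (δ/(4*C)) := by
        intro i _
        have hwle : Wt K i ≤ 2 * Mb / η := by
          have h7 := hWt_le K i
          have h8 : η / 2 < xs K i := by rw [hxsK]; exact hKcoord i
          have h9 : Mb / xs K i ≤ Mb / (η/2) := by
            apply div_le_div_of_nonneg_left hMb.le (by linarith) (by linarith)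
          calc Wt K i ≤ Mb / xs K i := h7
            _ ≤ Mb / (η/2) := h9
            _ = 2 * Mb / η := by field_simp
        have hdabs : |x' i - xs K i| ≤ δ/(4*C) := by
          rw [hxsK, abs_sub_comm]
          exact hKdist i
        calc Wt K i * (x' i - xs K i) ≤ |Wt K i * (x' i - xs K i)| := le_abs_self _
          _ = Wt K i * |x' i - xs K i| := by
              rw [abs_mul, abs_of_nonneg (hWt_pos K i).le]
          _ ≤ (2 * Mb / η) * (δ/(4*C)) :=
              mul_le_mul hwle hdabs (abs_nonneg _) (by positivity)
      have h6' : ∑ i, Wt K i * (x' i - xs K i) ≤ (e+1 : ℝ) * ((2 * Mb / η) * (δ/(4*C))) := by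
        calc ∑ i, Wt K i * (x' i - xs K i)
            ≤ ∑ _i : Fin (e+1), (2 * Mb / η) * (δ/(4*C)) := Finset.sum_le_sum hterm
          _ = (e+1 : ℝ) * ((2 * Mb / η) * (δ/(4*C))) := by
              rw [Finset.sum_const, Finset.card_univ, Fintype.card_fin, nsmul_eq_mul]
              push_cast
              ring
      have hCC : (e+1 : ℝ) * ((2 * Mb / η) * (δ/(4*C))) = δ/4 := by
        rw [hCdef]
        field_simp
      linarith
    have h11 : Ψ (xs K) ≤ Ψ x' + δ/4 := by
      have := hKval
      rw [← hxsK] at this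
      rw [abs_sub_le_iff] at this
      linarith [this.1]
    linarith
  refine ⟨K, fun n hn => ?_⟩
  have hupper : Finset.univ.inf' Finset.univ_nonempty
      (fun k : Fin (n+1) => ∑ i, Wt (k:ℕ) i * x' i) ≤ ∑ i, Wt K i * x' i := by
    have hKn : K < n + 1 := by omega
    have := Finset.inf'_le (fun k : Fin (n+1) => ∑ i, Wt (k:ℕ) i * x' i)
      (Finset.mem_univ (⟨K, hKn⟩ : Fin (n+1)))
    exact this
  rw [Real.dist_eq, abs_sub_lt_iff]
  constructor
  · linarith [hlow n, hclose, hupper]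
  · linarith [hlow n, hclose, hupper]

end S9


namespace S9
open scoped Topology
open Filter

lemma tendsto_usel_coeff {e : ℕ} {Ψ : (Fin (e+1) → ℝ) → ℝ} (hΨpos : ∀ q, 0 < Ψ q)
    {Wt : ℕ → Fin (e+1) → ℝ} (hWt_pos : ∀ k i, 0 < Wt k i)
    {x : Fin (e+1) → ℝ} (hx : x ∈ openSimplex (e+1))
    (hdiff : DifferentiableAt ℝ (fun y => Ψ (T e y)) (Sc e x))
    (hconv : ∀ z ∈ U e, Filter.Tendsto (fun n => Finset.univ.inf' Finset.univ_nonempty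
      (fun k : Fin (n+1) => ∑ i, Wt (k:ℕ) i * T e z i)) Filter.atTop (𝓝 (Ψ (T e z))))
    (i : Fin (e+1)) :
    Filter.Tendsto (fun n => usel (fun k : Fin (n+1) => Wt (k:ℕ)) x i) Filter.atTop
      (𝓝 ((Ψ x + gvec (fderiv ℝ (fun y => Ψ (T e y)) (Sc e x)) i
        - ∑ j, gvec (fderiv ℝ (fun y => Ψ (T e y)) (Sc e x)) j * x j) / Ψ x)) := by
  have hTy0 : T e (Sc e x) = x := T_Sc hx.2
  set Fc : (Fin e → ℝ) → ℝ := fun y => Ψ (T e y) with hFcdef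
  set y0 : Fin e → ℝ := Sc e x with hy0def
  have hy0U : y0 ∈ U e := mem_U_of_mem hx
  set g : Fin (e+1) → ℝ := gvec (fderiv ℝ Fc y0) with hgdef
  set wn : (n : ℕ) → Fin (n+1) → Fin (e+1) → ℝ := fun n k => Wt (k:ℕ) with hwndef
  set An : ℕ → ℝ := fun n => Adot (wn n) (argmin (wn n) x) x with hAndef
  have hApos : ∀ n, 0 < An n := fun n => dot_pos (fun i' => hWt_pos _ i') hx
  -- An → Ψ x
  have hAtend : Tendsto An atTop (𝓝 (Ψ x)) := by
    have h := hconv y0 hy0U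
    rw [hTy0] at h
    apply h.congr
    intro n
    exact Adot_argmin_eq (wn n) x
  -- coefficient convergence per chart direction
  have hζ : ∀ j : Fin e, Tendsto (fun n => wn n (argmin (wn n) x) (Fin.castSucc j)
      - wn n (argmin (wn n) x) (Fin.last e)) atTop (𝓝 (fderiv ℝ Fc y0 (Pi.single j 1))) := by
    intro j
    apply tendsto_supergrad_coeff (isOpen_U (e := e))
      (f := fun n z => Finset.univ.inf' Finset.univ_nonempty
        (fun k : Fin (n+1) => ∑ i', Wt (k:ℕ) i' * T e z i')) (F := Fc) hy0U hconv hdiff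
    intro n t
    have h1 : Finset.univ.inf' Finset.univ_nonempty
        (fun k : Fin (n+1) => ∑ i', Wt (k:ℕ) i' * T e (y0 + t • (Pi.single j (1:ℝ) : Fin e → ℝ)) i')
        ≤ Adot (wn n) (argmin (wn n) x) (T e (y0 + t • (Pi.single j (1:ℝ) : Fin e → ℝ))) :=
      Finset.inf'_le _ (Finset.mem_univ _)
    have h2 := dot_add_smul (wn n (argmin (wn n) x)) y0 t (Pi.single j 1)
    have h3 := dot_bvec_single (wn n (argmin (wn n) x)) j
    have h4 : Finset.univ.inf' Finset.univ_nonempty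
        (fun k : Fin (n+1) => ∑ i', Wt (k:ℕ) i' * T e y0 i') = An n := by
      have := Adot_argmin_eq (wn n) (T e y0)
      rw [hTy0] at this ⊢
      exact this
    show Finset.univ.inf' Finset.univ_nonempty
        (fun k : Fin (n+1) => ∑ i', Wt (k:ℕ) i' * T e (y0 + t • (Pi.single j (1:ℝ) : Fin e → ℝ)) i')
        ≤ Finset.univ.inf' Finset.univ_nonempty
          (fun k : Fin (n+1) => ∑ i', Wt (k:ℕ) i' * T e y0 i')
          + t * (wn n (argmin (wn n) x) (Fin.castSucc j) - wn n (argmin (wn n) x) (Fin.last e))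
    rw [h4]
    refine le_trans h1 (le_of_eq ?_)
    show (∑ i', wn n (argmin (wn n) x) i' * T e (y0 + t • (Pi.single j (1:ℝ) : Fin e → ℝ)) i') = _
    rw [h2, h3, hTy0]
    rfl
  have hglast : g (Fin.last e) = 0 := gvec_last _
  have hgcs : ∀ j : Fin e, g (Fin.castSucc j) = fderiv ℝ Fc y0 (Pi.single j 1) :=
    fun j => gvec_castSucc _ j
  set un : ℕ → Fin (e+1) → ℝ := fun n => usel (wn n) x with hundef
  set vlim : Fin (e+1) → ℝ := fun i' => (Ψ x + g i' - ∑ j', g j' * x j') / Ψ x with hvlimdef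
  have hD : ∀ i', Tendsto (fun n => un n i' - un n (Fin.last e)) atTop
      (𝓝 (vlim i' - vlim (Fin.last e))) := by
    intro i'
    rcases Fin.eq_castSucc_or_eq_last i' with ⟨j, rfl⟩ | rfl
    · have hlimval : vlim (Fin.castSucc j) - vlim (Fin.last e)
          = fderiv ℝ Fc y0 (Pi.single j 1) / Ψ x := by
        rw [hvlimdef]
        simp only
        rw [div_sub_div_same]
        rw [show Ψ x + g (Fin.castSucc j) - ∑ j', g j' * x j'
            - (Ψ x + g (Fin.last e) - ∑ j', g j' * x j')
            = g (Fin.castSucc j) - g (Fin.last e) by ring]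
        rw [hgcs, hglast, sub_zero]
      rw [hlimval]
      have h5 : ∀ n, un n (Fin.castSucc j) - un n (Fin.last e)
          = (wn n (argmin (wn n) x) (Fin.castSucc j)
            - wn n (argmin (wn n) x) (Fin.last e)) / An n := by
        intro n
        show wn n (argmin (wn n) x) (Fin.castSucc j) / An n
          - wn n (argmin (wn n) x) (Fin.last e) / An n = _
        rw [div_sub_div_same]
      apply Tendsto.congr (fun n => (h5 n).symm)
      exact (hζ j).div hAtend (hΨpos x).ne'
    · simpa using (tendsto_const_nhds : Tendsto (fun _ : ℕ => (0:ℝ)) atTop (𝓝 0))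
  have hudot : ∀ n, ∑ j', un n j' * x j' = 1 := by
    intro n
    exact coeff_dot_self (dot_pos (fun i' => hWt_pos _ i') hx).ne'
  have hvdot : ∑ j', vlim j' * x j' = 1 := by
    have hw := wvec_dot_self (Ψ := Ψ) (x := x) (g := g) hx.2
    have h8 : ∀ j', vlim j' * x j' = (wvec Ψ x g j' * x j') / Ψ x := by
      intro j'
      rw [hvlimdef]
      simp only [wvec]
      ring
    rw [Finset.sum_congr rfl (fun j' _ => h8 j'), ← Finset.sum_div, hw]
    exact div_self (hΨpos x).ne'
  have hlast : Tendsto (fun n => un n (Fin.last e)) atTop (𝓝 (vlim (Fin.last e))) := by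
    have hid : ∀ n, un n (Fin.last e) = 1 - ∑ j', x j' * (un n j' - un n (Fin.last e)) := by
      intro n
      have h7 : ∑ j', x j' * (un n j' - un n (Fin.last e))
          = (∑ j', un n j' * x j') - (∑ j', x j') * un n (Fin.last e) := by
        rw [Finset.sum_mul, ← Finset.sum_sub_distrib]
        apply Finset.sum_congr rfl
        intros; ring
      rw [h7, hudot n, hx.2]; ring
    have hid2 : vlim (Fin.last e) = 1 - ∑ j', x j' * (vlim j' - vlim (Fin.last e)) := by
      have h7 : ∑ j', x j' * (vlim j' - vlim (Fin.last e))
          = (∑ j', vlim j' * x j') - (∑ j', x j') * vlim (Fin.last e) := by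
        rw [Finset.sum_mul, ← Finset.sum_sub_distrib]
        apply Finset.sum_congr rfl
        intros; ring
      rw [h7, hvdot, hx.2]; ring
    rw [hid2]
    apply Tendsto.congr (fun n => (hid n).symm)
    exact tendsto_const_nhds.sub
      (tendsto_finset_sum _ fun j' _ => tendsto_const_nhds.mul (hD j'))
  have hfinal : Tendsto (fun n => (un n i - un n (Fin.last e)) + un n (Fin.last e)) atTop
      (𝓝 ((vlim i - vlim (Fin.last e)) + vlim (Fin.last e))) := (hD i).add hlast
  simpa using hfinal

end S9

/-- a bounded exponentially concave function can be approximated in the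
weighted `H^{c,p}` (semi-)norm by minima of finitely many log-affine functions.
The a.e.-defined gradients are formalized as (existentially chosen) supergradient
selections `u` of `min_k log(w_kᵀ·)` and `v` of `φ`. -/
theorem statement9 {d : ℕ} (hd : 2 ≤ d)
    (φ : (Fin d → ℝ) → ℝ) (hφ : ExpConcave φ)
    (m M : ℝ) (hbound : ∀ x ∈ openSimplex d, m ≤ φ x ∧ φ x ≤ M)
    (c : Fin d → Fin d → (Fin d → ℝ) → ℝ)
    (hccont : ∀ i j, ContinuousOn (c i j) (openSimplex d))
    (hcsymm : ∀ x ∈ openSimplex d, ∀ i j, c i j x = c j i x)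
    (hcpsd : ∀ x ∈ openSimplex d, ∀ v : Fin d → ℝ,
      0 ≤ ∑ i, ∑ j, v i * c i j x * v j)
    (p : (Fin d → ℝ) → ℝ) (hpmeas : Measurable p)
    (hppos : ∀ x ∈ openSimplex d, 0 < p x)
    (hint : ∀ i j, IntegrableOn
      (fun x => |c i j x| / (x i * x j) * p x) (openSimplex d) (simplexMeasure d))
    (ε : ℝ) (hε : 0 < ε) :
    ∃ (n : ℕ) (w : Fin (n + 1) → Fin d → ℝ), (∀ k i, 0 < w k i) ∧
      ∃ u v : (Fin d → ℝ) → Fin d → ℝ,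
        (∀ x ∈ openSimplex d, u x ∈ superdiff (minLogAffine w) x) ∧
        (∀ x ∈ openSimplex d, v x ∈ superdiff φ x) ∧
        IntegrableOn
          (fun x => (∑ i, ∑ j, (u x i - v x i) * c i j x * (u x j - v x j)) * p x)
          (openSimplex d) (simplexMeasure d) ∧
        (∫ x in openSimplex d,
            (∑ i, ∑ j, (u x i - v x i) * c i j x * (u x j - v x j)) * p x
            ∂(simplexMeasure d)) < ε := by
  classical
  obtain ⟨e, rfl⟩ : ∃ e, d = e + 1 := ⟨d - 1, by omega⟩
  clear hd
  set Ψ : (Fin (e+1) → ℝ) → ℝ := fun x => Real.exp (φ x) with hΨdef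
  have hΨconc : ConcaveOn ℝ (openSimplex (e+1)) Ψ := hφ
  have hΨpos : ∀ q : Fin (e+1) → ℝ, 0 < Ψ q := fun q => Real.exp_pos _
  have hΨm : ∀ q ∈ openSimplex (e+1), Real.exp m ≤ Ψ q :=
    fun q hq => Real.exp_le_exp.2 (hbound q hq).1
  have hΨM : ∀ q ∈ openSimplex (e+1), Ψ q ≤ Real.exp M :=
    fun q hq => Real.exp_le_exp.2 (hbound q hq).2
  set Fc : (Fin e → ℝ) → ℝ := fun y => Ψ (S9.T e y) with hFcdef
  have hFc_conc : ConcaveOn ℝ (S9.U e) Fc := S9.concaveOn_F hΨconc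
  have hFc_cont : ContinuousOn Fc (S9.U e) := hFc_conc.continuousOn S9.isOpen_U
  have hFc_lip : LocallyLipschitzOn (S9.U e) Fc := hFc_conc.locallyLipschitzOn S9.isOpen_U
  have hΔmeas : MeasurableSet (openSimplex (e+1)) := by
    have h1 : openSimplex (e+1) = (⋂ i, {x : Fin (e+1) → ℝ | 0 < x i}) ∩
        {x : Fin (e+1) → ℝ | ∑ i, x i = 1} := by
      ext x
      simp only [openSimplex, Set.mem_setOf_eq, Set.mem_inter_iff, Set.mem_iInter]
    rw [h1]
    exact (MeasurableSet.iInter fun i =>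
        measurableSet_lt measurable_const (measurable_pi_apply i)).inter
      (measurableSet_eq_fun (Finset.measurable_sum _ fun i _ => measurable_pi_apply i)
        measurable_const)
  -- supergradient selection for Ψ
  have hsel : ∀ x, x ∈ openSimplex (e+1) → ∃ g : Fin (e+1) → ℝ,
      ∀ q ∈ openSimplex (e+1), Ψ q ≤ Ψ x + ∑ i, g i * (q i - x i) := by
    intro x hx
    obtain ⟨L, hL⟩ := exists_chart_supergradient S9.isOpen_U hFc_conc hFc_cont
      (S9.mem_U_of_mem hx)
    exact ⟨S9.gvec L, S9.chart_supergrad_transfer hx L hL⟩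
  set gsel : (Fin (e+1) → ℝ) → (Fin (e+1) → ℝ) := fun x =>
    if hx : x ∈ openSimplex (e+1) then
      (if DifferentiableAt ℝ Fc (S9.Sc e x) then S9.gvec (fderiv ℝ Fc (S9.Sc e x))
       else Classical.choose (hsel x hx))
    else 0 with hgseldef
  have hgsel_diff : ∀ x, x ∈ openSimplex (e+1) → DifferentiableAt ℝ Fc (S9.Sc e x) →
      gsel x = S9.gvec (fderiv ℝ Fc (S9.Sc e x)) := by
    intro x hx hdiff
    rw [hgseldef]
    simp only
    rw [dif_pos hx, if_pos hdiff]
  have hgsel : ∀ x, x ∈ openSimplex (e+1) →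
      ∀ q ∈ openSimplex (e+1), Ψ q ≤ Ψ x + ∑ i, gsel x i * (q i - x i) := by
    intro x hx
    by_cases hdiff : DifferentiableAt ℝ Fc (S9.Sc e x)
    · rw [hgsel_diff x hx hdiff]
      exact S9.chart_supergrad_transfer hx _
        (supergrad_of_differentiableAt S9.isOpen_U hFc_conc (S9.mem_U_of_mem hx) hdiff)
    · have hg2 : gsel x = Classical.choose (hsel x hx) := by
        rw [hgseldef]; simp only; rw [dif_pos hx, if_neg hdiff]
      rw [hg2]
      exact Classical.choose_spec (hsel x hx)
  -- tangent plane coefficients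
  have hWpos : ∀ x, x ∈ openSimplex (e+1) → ∀ i, 0 < S9.wvec Ψ x (gsel x) i := fun x hx i =>
    lt_of_lt_of_le (Real.exp_pos m) (S9.wvec_ge hx (hgsel x hx) hΨm i)
  have hWself : ∀ x, x ∈ openSimplex (e+1) → ∑ j, S9.wvec Ψ x (gsel x) j * x j = Ψ x :=
    fun x hx => S9.wvec_dot_self hx.2
  set vsel : (Fin (e+1) → ℝ) → (Fin (e+1) → ℝ) :=
    fun x i => S9.wvec Ψ x (gsel x) i / Ψ x with hvseldef
  have hv_superdiff : ∀ x ∈ openSimplex (e+1), vsel x ∈ superdiff φ x := by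
    intro x hx
    have hle : ∀ q ∈ openSimplex (e+1),
        φ q ≤ Real.log (∑ i, S9.wvec Ψ x (gsel x) i * q i) := by
      intro q hq
      have h1 : Ψ q ≤ ∑ i, S9.wvec Ψ x (gsel x) i * q i :=
        S9.wvec_tangent_ge hx (hgsel x hx) q hq
      have h2 : φ q = Real.log (Ψ q) := (Real.log_exp _).symm
      rw [h2]
      exact Real.log_le_log (hΨpos q) h1
    have heq : φ x = Real.log (∑ i, S9.wvec Ψ x (gsel x) i * x i) := by
      rw [hWself x hx]; exact (Real.log_exp _).symm
    have h := S9.superdiff_of_tangent hx (hWpos x hx) hle heq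
    have hfun : (fun i => S9.wvec Ψ x (gsel x) i / (∑ j, S9.wvec Ψ x (gsel x) j * x j))
        = vsel x := by
      funext i; rw [hWself x hx]
    exact hfun ▸ h
  have hv_bounds : ∀ x, x ∈ openSimplex (e+1) → ∀ i, 0 < vsel x i ∧ vsel x i ≤ 1 / x i := by
    intro x hx i
    have h := S9.coeff_bounds (hWpos x hx) hx i
    rw [hWself x hx] at h
    exact h
  -- a dense sequence of tangent planes
  have hx₀ : (fun _ : Fin (e+1) => 1/((e:ℝ)+1)) ∈ openSimplex (e+1) := by
    constructor
    · intro i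
      have : (0:ℝ) < (e:ℝ)+1 := by positivity
      positivity
    · rw [Finset.sum_const, Finset.card_univ, Fintype.card_fin, nsmul_eq_mul]
      have : ((e:ℝ)+1) ≠ 0 := by positivity
      push_cast
      field_simp
  set qs : ℕ → (Fin e → ℝ) := TopologicalSpace.denseSeq (Fin e → ℝ) with hqsdef
  have hqs : DenseRange qs := TopologicalSpace.denseRange_denseSeq _
  set xs : ℕ → Fin (e+1) → ℝ := fun k =>
    if qs k ∈ S9.U e then S9.T e (qs k) else (fun _ => 1/((e:ℝ)+1)) with hxsdef
  have hxs : ∀ k, xs k ∈ openSimplex (e+1) := by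
    intro k
    rw [hxsdef]
    simp only
    split_ifs with h
    · exact h
    · exact hx₀
  have hxs_eq : ∀ k, qs k ∈ S9.U e → xs k = S9.T e (qs k) := by
    intro k h
    rw [hxsdef]
    simp only
    rw [if_pos h]
  set Wt : ℕ → Fin (e+1) → ℝ := fun k => S9.wvec Ψ (xs k) (gsel (xs k)) with hWtdef
  have hWt_pos : ∀ k i, 0 < Wt k i := fun k i => hWpos (xs k) (hxs k) i
  have hWt_ge : ∀ k, ∀ q ∈ openSimplex (e+1), Ψ q ≤ ∑ i, Wt k i * q i :=
    fun k q hq => S9.wvec_tangent_ge (hxs k) (hgsel (xs k) (hxs k)) q hq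
  have hWt_self : ∀ k, ∑ i, Wt k i * xs k i = Ψ (xs k) := fun k => hWself (xs k) (hxs k)
  have hWt_le : ∀ k i, Wt k i ≤ Real.exp M / xs k i := by
    intro k i
    have h1 : Wt k i * xs k i ≤ ∑ j, Wt k j * xs k j :=
      Finset.single_le_sum (fun j _ => (mul_pos (hWt_pos k j) ((hxs k).1 j)).le)
        (Finset.mem_univ i)
    rw [hWt_self k] at h1
    have h2 : Ψ (xs k) ≤ Real.exp M := hΨM _ (hxs k)
    rw [le_div_iff₀ ((hxs k).1 i)]
    linarith
  -- convergence of the min-affine approximations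
  have hconv : ∀ z ∈ S9.U e, Filter.Tendsto (fun n => Finset.univ.inf' Finset.univ_nonempty
      (fun k : Fin (n+1) => ∑ i, Wt (k:ℕ) i * S9.T e z i)) Filter.atTop
      (𝓝 (Ψ (S9.T e z))) :=
    fun z hz => S9.tendsto_mval hFc_cont (Real.exp_pos M) hxs hWt_ge hWt_self hWt_le
      hWt_pos hqs hxs_eq hz
  -- the approximating selections
  set un : (n : ℕ) → (Fin (e+1) → ℝ) → Fin (e+1) → ℝ :=
    fun n => S9.usel (fun k : Fin (n+1) => Wt (k:ℕ)) with hundef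
  have hu_meas : ∀ n, Measurable (un n) := fun n => S9.measurable_usel _
  have hu_superdiff : ∀ n, ∀ x ∈ openSimplex (e+1),
      un n x ∈ superdiff (minLogAffine (fun k : Fin (n+1) => Wt (k:ℕ))) x :=
    fun n x hx => S9.usel_superdiff _ (fun k i => hWt_pos _ i) hx
  have hu_bounds : ∀ n x, x ∈ openSimplex (e+1) → ∀ i, 0 < un n x i ∧ un n x i ≤ 1 / x i :=
    fun n x hx i => S9.usel_bounds _ (fun k i' => hWt_pos _ i') hx i
  -- pointwise convergence
  have hptwise : ∀ x, x ∈ openSimplex (e+1) → DifferentiableAt ℝ Fc (S9.Sc e x) →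
      ∀ i, Filter.Tendsto (fun n => un n x i) Filter.atTop (𝓝 (vsel x i)) := by
    intro x hx hdiff i
    have h := S9.tendsto_usel_coeff hΨpos hWt_pos hx hdiff hconv i
    have hveq : vsel x i = (Ψ x + S9.gvec (fderiv ℝ Fc (S9.Sc e x)) i
        - ∑ j, S9.gvec (fderiv ℝ Fc (S9.Sc e x)) j * x j) / Ψ x := by
      rw [hvseldef]
      simp only [S9.wvec]
      rw [hgsel_diff x hx hdiff]
    rw [hveq]
    exact h
  -- measure-theoretic facts
  have hμmap : simplexMeasure (e+1) = Measure.map (S9.T e) volume := rfl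
  have hTmeas : Measurable (S9.T e) := S9.continuous_T.measurable
  have hScmeas : Measurable (S9.Sc e) := S9.continuous_Sc.measurable
  have hae0 : ∀ᵐ y ∂(volume : Measure (Fin e → ℝ)), y ∈ S9.U e → DifferentiableAt ℝ Fc y :=
    ae_differentiableAt_of_locallyLipschitzOn volume S9.isOpen_U hFc_lip
  have hDmeas : MeasurableSet {x : Fin (e+1) → ℝ | DifferentiableAt ℝ Fc (S9.Sc e x)} :=
    hScmeas (measurableSet_of_differentiableAt ℝ Fc)
  have haeD : ∀ᵐ x ∂((simplexMeasure (e+1)).restrict (openSimplex (e+1))),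
      DifferentiableAt ℝ Fc (S9.Sc e x) := by
    rw [ae_restrict_iff' hΔmeas, ae_iff]
    have hset : {x | ¬ (x ∈ openSimplex (e+1) → DifferentiableAt ℝ Fc (S9.Sc e x))}
        = openSimplex (e+1) ∩ {x : Fin (e+1) → ℝ | DifferentiableAt ℝ Fc (S9.Sc e x)}ᶜ := by
      ext x
      simp only [Set.mem_setOf_eq, Set.mem_inter_iff, Set.mem_compl_iff, Classical.not_imp]
    rw [hset, hμmap, Measure.map_apply hTmeas (hΔmeas.inter hDmeas.compl)]
    have hpre : S9.T e ⁻¹' (openSimplex (e+1) ∩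
        {x : Fin (e+1) → ℝ | DifferentiableAt ℝ Fc (S9.Sc e x)}ᶜ)
        = {y | y ∈ S9.U e ∧ ¬ DifferentiableAt ℝ Fc y} := by
      ext y
      simp only [Set.mem_preimage, Set.mem_inter_iff, Set.mem_compl_iff, Set.mem_setOf_eq]
      rw [S9.Sc_T]
      exact Iff.rfl
    rw [hpre]
    rw [ae_iff] at hae0
    have hseteq : {y | y ∈ S9.U e ∧ ¬ DifferentiableAt ℝ Fc y}
        = {a | ¬(a ∈ S9.U e → DifferentiableAt ℝ Fc a)} := by
      ext y
      simp only [Set.mem_setOf_eq, Classical.not_imp]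
    rw [hseteq]
    exact hae0
  have haemem : ∀ᵐ x ∂((simplexMeasure (e+1)).restrict (openSimplex (e+1))),
      x ∈ openSimplex (e+1) := ae_restrict_mem hΔmeas
  -- the integrands
  set Gf : ℕ → (Fin (e+1) → ℝ) → ℝ := fun n x =>
    (∑ i, ∑ j, (un n x i - vsel x i) * c i j x * (un n x j - vsel x j)) * p x with hGfdef
  set Bf : (Fin (e+1) → ℝ) → ℝ := fun x => ∑ i, ∑ j, |c i j x| / (x i * x j) * p x with hBfdef
  have hBint : IntegrableOn Bf (openSimplex (e+1)) (simplexMeasure (e+1)) := by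
    apply integrable_finset_sum
    intro i _
    apply integrable_finset_sum
    intro j _
    exact hint i j
  -- the uniform bound
  have hb : ∀ n, ∀ᵐ x ∂((simplexMeasure (e+1)).restrict (openSimplex (e+1))),
      ‖Gf n x‖ ≤ Bf x := by
    intro n
    filter_upwards [haemem] with x hx
    simp only [hGfdef, hBfdef, Real.norm_eq_abs]
    have hp : 0 ≤ p x := (hppos x hx).le
    have hcoeff : ∀ i, |un n x i - vsel x i| ≤ 1 / x i := fun i =>
      S9.coeff_diff_bound (hx.1 i) (hu_bounds n x hx i).1 (hu_bounds n x hx i).2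
        (hv_bounds x hx i).1 (hv_bounds x hx i).2
    have hterm : ∀ i j, |(un n x i - vsel x i) * c i j x * (un n x j - vsel x j)|
        ≤ |c i j x| / (x i * x j) := by
      intro i j
      rw [abs_mul, abs_mul]
      have h1 := hcoeff i
      have h2 := hcoeff j
      have hxi := hx.1 i
      have hxj := hx.1 j
      have hstep : |un n x i - vsel x i| * |c i j x| * |un n x j - vsel x j|
          ≤ (1/x i) * |c i j x| * (1/x j) := by
        apply mul_le_mul _ h2 (abs_nonneg _) (by positivity)
        exact mul_le_mul_of_nonneg_right h1 (abs_nonneg _)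
      calc |un n x i - vsel x i| * |c i j x| * |un n x j - vsel x j|
          ≤ (1/x i) * |c i j x| * (1/x j) := hstep
        _ = |c i j x| / (x i * x j) := by field_simp <;> ring
    have hsum : |∑ i, ∑ j, (un n x i - vsel x i) * c i j x * (un n x j - vsel x j)|
        ≤ ∑ i, ∑ j, |c i j x| / (x i * x j) := by
      calc |∑ i, ∑ j, (un n x i - vsel x i) * c i j x * (un n x j - vsel x j)|
          ≤ ∑ i, |∑ j, (un n x i - vsel x i) * c i j x * (un n x j - vsel x j)| :=
            Finset.abs_sum_le_sum_abs _ _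
        _ ≤ ∑ i, ∑ j, |(un n x i - vsel x i) * c i j x * (un n x j - vsel x j)| :=
            Finset.sum_le_sum fun i _ => Finset.abs_sum_le_sum_abs _ _
        _ ≤ ∑ i, ∑ j, |c i j x| / (x i * x j) :=
            Finset.sum_le_sum fun i _ => Finset.sum_le_sum fun j _ => hterm i j
    calc |(∑ i, ∑ j, (un n x i - vsel x i) * c i j x * (un n x j - vsel x j)) * p x|
        = |∑ i, ∑ j, (un n x i - vsel x i) * c i j x * (un n x j - vsel x j)| * p x := by
          rw [abs_mul, abs_of_nonneg hp]
      _ ≤ (∑ i, ∑ j, |c i j x| / (x i * x j)) * p x := mul_le_mul_of_nonneg_right hsum hp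
      _ = ∑ i, ∑ j, |c i j x| / (x i * x j) * p x := by
          rw [Finset.sum_mul]
          apply Finset.sum_congr rfl
          intro i _
          rw [Finset.sum_mul]
  -- a.e. strong measurability
  have hsm : ∀ n, AEStronglyMeasurable (Gf n)
      ((simplexMeasure (e+1)).restrict (openSimplex (e+1))) := by
    intro n
    set FS : (Fin (e+1) → ℝ) → ℝ := fun x => Fc (S9.Sc e x) with hFSdef
    set gd : (Fin (e+1) → ℝ) → Fin (e+1) → ℝ :=
      fun x => S9.gvec (fderiv ℝ Fc (S9.Sc e x)) with hgddef
    set vm : (Fin (e+1) → ℝ) → Fin (e+1) → ℝ :=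
      fun x i => (FS x + gd x i - ∑ j, gd x j * x j) / FS x with hvmdef
    have hFSaem : AEMeasurable FS
        ((simplexMeasure (e+1)).restrict (openSimplex (e+1))) :=
      (hFc_cont.comp S9.continuous_Sc.continuousOn
        (fun x hx => S9.mem_U_of_mem hx)).aemeasurable hΔmeas
    have hgdm : ∀ i, Measurable (fun x => gd x i) := by
      intro i
      have : (fun x => gd x i) = fun x => S9.gvec (fderiv ℝ Fc (S9.Sc e x)) i := rfl
      rw [this]
      simp only [S9.gvec]
      by_cases h : (i:ℕ) < e
      · simp only [dif_pos h]
        exact (measurable_fderiv_apply_const ℝ Fc _).comp hScmeas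
      · simp only [dif_neg h]
        exact measurable_const
    have hvmaem : ∀ i, AEMeasurable (fun x => vm x i)
        ((simplexMeasure (e+1)).restrict (openSimplex (e+1))) := by
      intro i
      apply AEMeasurable.div _ hFSaem
      apply AEMeasurable.sub
      · exact hFSaem.add (hgdm i).aemeasurable
      · exact Finset.aemeasurable_fun_sum _ fun j _ =>
          (hgdm j).aemeasurable.mul (measurable_pi_apply j).aemeasurable
    have hcaem : ∀ i j, AEMeasurable (c i j)
        ((simplexMeasure (e+1)).restrict (openSimplex (e+1))) := fun i j =>
      (hccont i j).aemeasurable hΔmeas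
    have hui : ∀ i', Measurable (fun x => un n x i') := fun i' =>
      (measurable_pi_apply i').comp (hu_meas n)
    have hGm_aem : AEMeasurable (fun x =>
        (∑ i, ∑ j, (un n x i - vm x i) * c i j x * (un n x j - vm x j)) * p x)
        ((simplexMeasure (e+1)).restrict (openSimplex (e+1))) := by
      apply AEMeasurable.mul _ hpmeas.aemeasurable
      apply Finset.aemeasurable_fun_sum
      intro i _
      apply Finset.aemeasurable_fun_sum
      intro j _
      exact ((((hui i).aemeasurable.sub (hvmaem i)).mul (hcaem i j)).mul
        ((hui j).aemeasurable.sub (hvmaem j)))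
    apply hGm_aem.aestronglyMeasurable.congr
    filter_upwards [haemem, haeD] with x hx hdiff
    have hvm_eq : ∀ i, vm x i = vsel x i := by
      intro i
      have hFS : FS x = Ψ x := by
        rw [hFSdef]
        simp only
        rw [hFcdef]
        simp only
        rw [S9.T_Sc hx.2]
      have hgd : gd x = gsel x := by
        rw [hgddef]
        simp only
        rw [hgsel_diff x hx hdiff]
      rw [hvmdef, hvseldef]
      simp only [S9.wvec]
      rw [hFS, hgd]
    simp only [hGfdef]
    apply congr_arg₂ _ _ rfl
    apply Finset.sum_congr rfl
    intro i _
    apply Finset.sum_congr rfl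
    intro j _
    rw [hvm_eq i, hvm_eq j]
  -- a.e. convergence of the integrands to zero
  have hlim : ∀ᵐ x ∂((simplexMeasure (e+1)).restrict (openSimplex (e+1))),
      Filter.Tendsto (fun n => Gf n x) Filter.atTop (𝓝 ((fun _ => (0:ℝ)) x)) := by
    filter_upwards [haemem, haeD] with x hx hdiff
    have hu := hptwise x hx hdiff
    have h0 : Filter.Tendsto (fun n =>
        (∑ i, ∑ j, (un n x i - vsel x i) * c i j x * (un n x j - vsel x j)) * p x)
        Filter.atTop (𝓝 ((∑ i, ∑ j,
          (vsel x i - vsel x i) * c i j x * (vsel x j - vsel x j)) * p x)) := by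
      apply Filter.Tendsto.mul _ tendsto_const_nhds
      apply tendsto_finset_sum
      intro i _
      apply tendsto_finset_sum
      intro j _
      exact (((hu i).sub tendsto_const_nhds).mul tendsto_const_nhds).mul
        ((hu j).sub tendsto_const_nhds)
    simpa using h0
  -- dominated convergence
  have hdct := MeasureTheory.tendsto_integral_of_dominated_convergence (F := Gf)
    (f := fun _ => (0:ℝ)) Bf hsm hBint hb hlim
  rw [MeasureTheory.integral_zero] at hdct
  have hev2 : ∀ᶠ n in Filter.atTop, (∫ x, Gf n x
      ∂((simplexMeasure (e+1)).restrict (openSimplex (e+1)))) < ε :=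
    hdct.eventually_lt_const hε
  obtain ⟨n, hn⟩ := hev2.exists
  refine ⟨n, (fun k : Fin (n+1) => Wt (k:ℕ)), fun k i => hWt_pos _ i, un n, vsel,
    hu_superdiff n, hv_superdiff, ?_, ?_⟩
  · exact MeasureTheory.Integrable.mono' hBint (hsm n) (hb n)
  · exact hn
end

section
/- Let ℓ : (0,1) → ℝ be continuously differentiable. Define φ : (0,1) → ℝ by φ(x) = 1/x if ℓ(x) > 1/x, φ(x) = −1/(1−x) if ℓ(x) < −1/(1−x), and φ(x) = ℓ(x) otherwise; fix θ ∈ (0,1) and set Ĝ(x) := exp(∫_θ^x φ(y) dy). Let A := {x ∈ (0,1) : −1/(1−x) < ℓ(x) < 1/x}. Then Ĝ is concave on (0,1) if and only if ℓ(x)² + ℓ′(x) ≤ 0 for every x ∈ A. -/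
open scoped BigOperators

/-- The clipped drift function: `φ(x) = 1/x` if `ℓ(x) > 1/x`, `φ(x) = -1/(1-x)` if
`ℓ(x) < -1/(1-x)`, and `φ(x) = ℓ(x)` otherwise. -/
noncomputable def clipEll (ℓ : ℝ → ℝ) (x : ℝ) : ℝ :=
  if 1 / x < ℓ x then 1 / x
  else if ℓ x < -(1 / (1 - x)) then -(1 / (1 - x))
  else ℓ x

/-- `Ĝ(x) = exp(∫_θ^x φ(y) dy)`, the generating function of the optimal long-only
portfolio in feedback form in dimension 2. -/
noncomputable def Ghat (ℓ : ℝ → ℝ) (θ : ℝ) (x : ℝ) : ℝ :=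
  Real.exp (∫ y in θ..x, clipEll ℓ y)

namespace Stmt10Aux

open Set Filter Topology

/-- `F = Ĝ'` in feedback form. -/
noncomputable def Fd (ℓ : ℝ → ℝ) (θ : ℝ) (x : ℝ) : ℝ := clipEll ℓ x * Ghat ℓ θ x

noncomputable def aF (ℓ : ℝ → ℝ) (θ : ℝ) (x : ℝ) : ℝ := Ghat ℓ θ x / x

noncomputable def cF (ℓ : ℝ → ℝ) (θ : ℝ) (x : ℝ) : ℝ := -(Ghat ℓ θ x / (1 - x))

variable {ℓ : ℝ → ℝ} {θ : ℝ}

lemma bnd_lt {x : ℝ} (hx : x ∈ Set.Ioo (0:ℝ) 1) : -(1 / (1 - x)) < 1 / x := by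
  have h1 : (0:ℝ) < x := hx.1
  have h2 : (0:ℝ) < 1 - x := by linarith [hx.2]
  have h3 : (0:ℝ) < 1 / x := by positivity
  have h4 : (0:ℝ) < 1 / (1 - x) := by positivity
  linarith

lemma clip_le {x : ℝ} (hx : x ∈ Set.Ioo (0:ℝ) 1) : clipEll ℓ x ≤ 1 / x := by
  have h := bnd_lt hx
  unfold clipEll
  split_ifs with h1 h2
  · exact le_rfl
  · exact h.le
  · exact not_lt.1 h1

lemma le_clip {x : ℝ} (hx : x ∈ Set.Ioo (0:ℝ) 1) : -(1 / (1 - x)) ≤ clipEll ℓ x := by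
  have h := bnd_lt hx
  unfold clipEll
  split_ifs with h1 h2
  · exact h.le
  · exact le_rfl
  · exact not_lt.1 h2

lemma clip_eq_A {x : ℝ} (h1 : -(1 / (1 - x)) < ℓ x) (h2 : ℓ x < 1 / x) :
    clipEll ℓ x = ℓ x := by
  unfold clipEll
  rw [if_neg (not_lt.2 h2.le), if_neg (not_lt.2 h1.le)]

lemma clip_eq_upper {x : ℝ} (hx : x ∈ Set.Ioo (0:ℝ) 1) (h : 1 / x ≤ ℓ x) :
    clipEll ℓ x = 1 / x := by
  have hb := bnd_lt hx
  unfold clipEll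
  split_ifs with h1 h2
  · rfl
  · linarith
  · linarith [not_lt.1 h1]

lemma clip_eq_lower {x : ℝ} (hx : x ∈ Set.Ioo (0:ℝ) 1) (h : ℓ x ≤ -(1 / (1 - x))) :
    clipEll ℓ x = -(1 / (1 - x)) := by
  have hb := bnd_lt hx
  unfold clipEll
  split_ifs with h1 h2
  · linarith
  · rfl
  · linarith [not_lt.1 h2]

lemma clip_eq_minmax {x : ℝ} (hx : x ∈ Set.Ioo (0:ℝ) 1) :
    clipEll ℓ x = min (1 / x) (max (ℓ x) (-(1 / (1 - x)))) := by
  have hb := bnd_lt hx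
  rcases le_or_gt (ℓ x) (-(1 / (1 - x))) with h | h
  · rw [clip_eq_lower hx h, max_eq_right h, min_eq_right hb.le]
  rcases le_or_gt (1 / x) (ℓ x) with h' | h'
  · rw [clip_eq_upper hx h', max_eq_left h.le, min_eq_left h']
  · rw [clip_eq_A h h', max_eq_left h.le, min_eq_right h'.le]

lemma clip_contOn (hc : ContinuousOn ℓ (Set.Ioo 0 1)) :
    ContinuousOn (clipEll ℓ) (Set.Ioo 0 1) := by
  have h1 : ContinuousOn (fun x : ℝ => 1 / x) (Set.Ioo 0 1) :=
    continuousOn_const.div continuousOn_id fun x hx => ne_of_gt hx.1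
  have h2 : ContinuousOn (fun x : ℝ => -(1 / (1 - x))) (Set.Ioo 0 1) :=
    (continuousOn_const.div (continuousOn_const.sub continuousOn_id)
      fun x hx => by have := hx.2; intro hh; simp only [Pi.sub_apply, id] at hh; linarith).neg
  exact (h1.inf (hc.sup h2)).congr fun x hx => clip_eq_minmax hx

lemma ghat_pos {x : ℝ} : 0 < Ghat ℓ θ x := Real.exp_pos _

lemma ghat_hasDerivAt (hc : ContinuousOn ℓ (Set.Ioo 0 1)) (hθ : θ ∈ Set.Ioo (0:ℝ) 1)
    {x : ℝ} (hx : x ∈ Set.Ioo (0:ℝ) 1) :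
    HasDerivAt (Ghat ℓ θ) (clipEll ℓ x * Ghat ℓ θ x) x := by
  have hsub : Set.uIcc θ x ⊆ Set.Ioo (0:ℝ) 1 := Set.ordConnected_Ioo.uIcc_subset hθ hx
  have hInt : IntervalIntegrable (clipEll ℓ) MeasureTheory.volume θ x :=
    ((clip_contOn hc).mono hsub).intervalIntegrable
  have hmeas : StronglyMeasurableAtFilter (clipEll ℓ) (𝓝 x) :=
    (clip_contOn hc).stronglyMeasurableAtFilter isOpen_Ioo x hx
  have hca : ContinuousAt (clipEll ℓ) x :=
    (clip_contOn hc).continuousAt (isOpen_Ioo.mem_nhds hx)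
  have hI : HasDerivAt (fun u => ∫ y in θ..u, clipEll ℓ y) (clipEll ℓ x) x :=
    intervalIntegral.integral_hasDerivAt_right hInt hmeas hca
  have := hI.exp
  exact (by simpa [Ghat, mul_comm] using this :
    HasDerivAt (fun u => Real.exp (∫ y in θ..u, clipEll ℓ y)) (clipEll ℓ x * Ghat ℓ θ x) x)

lemma ghat_contOn (hc : ContinuousOn ℓ (Set.Ioo 0 1)) (hθ : θ ∈ Set.Ioo (0:ℝ) 1) :
    ContinuousOn (Ghat ℓ θ) (Set.Ioo 0 1) := fun x hx =>
  ((ghat_hasDerivAt hc hθ hx).differentiableAt.continuousAt).continuousWithinAt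

lemma F_contOn (hc : ContinuousOn ℓ (Set.Ioo 0 1)) (hθ : θ ∈ Set.Ioo (0:ℝ) 1) :
    ContinuousOn (Fd ℓ θ) (Set.Ioo 0 1) :=
  (clip_contOn hc).mul (ghat_contOn hc hθ)

lemma F_le_a {x : ℝ} (hx : x ∈ Set.Ioo (0:ℝ) 1) : Fd ℓ θ x ≤ aF ℓ θ x := by
  have h := mul_le_mul_of_nonneg_right (clip_le (ℓ := ℓ) hx) (ghat_pos (ℓ := ℓ) (θ := θ) (x := x)).le
  have hx0 : x ≠ 0 := ne_of_gt hx.1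
  have h2 : (1 / x) * Ghat ℓ θ x = Ghat ℓ θ x / x := by field_simp
  unfold Fd aF
  linarith

lemma c_le_F {x : ℝ} (hx : x ∈ Set.Ioo (0:ℝ) 1) : cF ℓ θ x ≤ Fd ℓ θ x := by
  have h := mul_le_mul_of_nonneg_right (le_clip (ℓ := ℓ) hx) (ghat_pos (ℓ := ℓ) (θ := θ) (x := x)).le
  have hx1 : (1:ℝ) - x ≠ 0 := by have := hx.2; intro hh; linarith
  have h2 : (-(1 / (1 - x))) * Ghat ℓ θ x = -(Ghat ℓ θ x / (1 - x)) := by field_simp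
  unfold Fd cF
  linarith

lemma aF_anti (hc : ContinuousOn ℓ (Set.Ioo 0 1)) (hθ : θ ∈ Set.Ioo (0:ℝ) 1) :
    AntitoneOn (aF ℓ θ) (Set.Ioo 0 1) := by
  apply antitoneOn_of_deriv_nonpos (convex_Ioo 0 1)
  · exact (ghat_contOn hc hθ).div continuousOn_id fun x hx => ne_of_gt hx.1
  · rw [interior_Ioo]
    intro x hx
    exact (((ghat_hasDerivAt hc hθ hx).div (hasDerivAt_id x)
      (ne_of_gt hx.1))).differentiableAt.differentiableWithinAt
  · rw [interior_Ioo]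
    intro x hx
    have hd : HasDerivAt (aF ℓ θ)
        ((clipEll ℓ x * Ghat ℓ θ x * x - Ghat ℓ θ x * 1) / x ^ 2) x :=
      (ghat_hasDerivAt hc hθ hx).div (hasDerivAt_id x) (ne_of_gt hx.1)
    rw [hd.deriv]
    have h1 : clipEll ℓ x * x ≤ 1 := (le_div_iff₀ hx.1).1 (clip_le hx)
    have hG : (0:ℝ) < Ghat ℓ θ x := ghat_pos
    have hnum : clipEll ℓ x * Ghat ℓ θ x * x - Ghat ℓ θ x * 1 ≤ 0 := by nlinarith
    exact div_nonpos_iff.2 (Or.inr ⟨hnum, by positivity⟩)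

lemma cF_anti (hc : ContinuousOn ℓ (Set.Ioo 0 1)) (hθ : θ ∈ Set.Ioo (0:ℝ) 1) :
    AntitoneOn (cF ℓ θ) (Set.Ioo 0 1) := by
  apply antitoneOn_of_deriv_nonpos (convex_Ioo 0 1)
  · exact ((ghat_contOn hc hθ).div (continuousOn_const.sub continuousOn_id)
      fun x hx => by have := hx.2; intro hh; simp only [Pi.sub_apply, id] at hh; linarith).neg
  · rw [interior_Ioo]
    intro x hx
    have hx1 : (1:ℝ) - x ≠ 0 := by have := hx.2; intro hh; linarith
    have hid : HasDerivAt (fun y : ℝ => 1 - y) (-1) x := by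
      simpa using (hasDerivAt_id x).const_sub 1
    exact ((ghat_hasDerivAt hc hθ hx).div hid hx1).neg.differentiableAt.differentiableWithinAt
  · rw [interior_Ioo]
    intro x hx
    have hx1 : (1:ℝ) - x ≠ 0 := by have := hx.2; intro hh; linarith
    have hx1' : (0:ℝ) < 1 - x := by have := hx.2; linarith
    have hid : HasDerivAt (fun y : ℝ => 1 - y) (-1) x := by
      simpa using (hasDerivAt_id x).const_sub 1
    have hd : HasDerivAt (cF ℓ θ)
        (-((clipEll ℓ x * Ghat ℓ θ x * (1 - x) - Ghat ℓ θ x * (-1)) / (1 - x) ^ 2)) x :=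
      ((ghat_hasDerivAt hc hθ hx).div hid hx1).neg
    rw [hd.deriv]
    have h1 : -(1:ℝ) ≤ clipEll ℓ x * (1 - x) := by
      have := mul_le_mul_of_nonneg_right (le_clip (ℓ := ℓ) hx) hx1'.le
      have he : (-(1 / (1 - x))) * (1 - x) = -1 := by field_simp
      linarith
    have hG : (0:ℝ) < Ghat ℓ θ x := ghat_pos
    have hnum : 0 ≤ clipEll ℓ x * Ghat ℓ θ x * (1 - x) - Ghat ℓ θ x * (-1) := by nlinarith
    have : 0 ≤ (clipEll ℓ x * Ghat ℓ θ x * (1 - x) - Ghat ℓ θ x * (-1)) / (1 - x) ^ 2 := by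
      positivity
    linarith

lemma eventually_A (hℓ : ContDiffOn ℝ 1 ℓ (Set.Ioo 0 1)) {r : ℝ} (hr : r ∈ Set.Ioo (0:ℝ) 1)
    (h1 : -(1 / (1 - r)) < ℓ r) (h2 : ℓ r < 1 / r) :
    ∀ᶠ x in 𝓝 r, x ∈ Set.Ioo (0:ℝ) 1 ∧ -(1 / (1 - x)) < ℓ x ∧ ℓ x < 1 / x := by
  have hmem : ∀ᶠ x in 𝓝 r, x ∈ Set.Ioo (0:ℝ) 1 :=
    eventually_of_mem (isOpen_Ioo.mem_nhds hr) fun x h => h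
  have hcl : ContinuousAt ℓ r := hℓ.continuousOn.continuousAt (isOpen_Ioo.mem_nhds hr)
  have hc1 : ContinuousAt (fun x : ℝ => 1 / x) r :=
    continuousAt_const.div continuousAt_id (ne_of_gt hr.1)
  have hc2 : ContinuousAt (fun x : ℝ => -(1 / (1 - x))) r :=
    (continuousAt_const.div (continuousAt_const.sub continuousAt_id)
      (by have := hr.2; intro hh; simp only [Pi.sub_apply, id] at hh; linarith)).neg
  exact hmem.and ((hc2.eventually_lt hcl h1).and (hcl.eventually_lt hc1 h2))

lemma F_hasDerivAt_A (hℓ : ContDiffOn ℝ 1 ℓ (Set.Ioo 0 1)) (hθ : θ ∈ Set.Ioo (0:ℝ) 1)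
    {r : ℝ} (hr : r ∈ Set.Ioo (0:ℝ) 1)
    (h1 : -(1 / (1 - r)) < ℓ r) (h2 : ℓ r < 1 / r) :
    HasDerivAt (Fd ℓ θ) ((deriv ℓ r + ℓ r ^ 2) * Ghat ℓ θ r) r := by
  have hev := eventually_A hℓ hr h1 h2
  have hev' : Fd ℓ θ =ᶠ[𝓝 r] fun x => ℓ x * Ghat ℓ θ x :=
    hev.mono fun x hx => by unfold Fd; rw [clip_eq_A hx.2.1 hx.2.2]
  have hdℓ : HasDerivAt ℓ (deriv ℓ r) r :=
    ((hℓ.differentiableOn one_ne_zero).differentiableAt (isOpen_Ioo.mem_nhds hr)).hasDerivAt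
  have hG := ghat_hasDerivAt hℓ.continuousOn hθ hr
  have hb : HasDerivAt (fun x => ℓ x * Ghat ℓ θ x)
      (deriv ℓ r * Ghat ℓ θ r + ℓ r * (clipEll ℓ r * Ghat ℓ θ r)) r := hdℓ.mul hG
  have hF : HasDerivAt (Fd ℓ θ)
      (deriv ℓ r * Ghat ℓ θ r + ℓ r * (clipEll ℓ r * Ghat ℓ θ r)) r :=
    hb.congr_of_eventuallyEq hev'
  convert hF using 1
  rw [clip_eq_A h1 h2]
  ring

lemma key_interval (hℓ : ContDiffOn ℝ 1 ℓ (Set.Ioo 0 1)) (hθ : θ ∈ Set.Ioo (0:ℝ) 1)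
    (hA : ∀ x ∈ Set.Ioo (0:ℝ) 1, -(1 / (1 - x)) < ℓ x → ℓ x < 1 / x → ℓ x ^ 2 + deriv ℓ x ≤ 0)
    {t r' : ℝ} (ht : t ∈ Set.Ioo (0:ℝ) 1) (hr' : r' ∈ Set.Ioo (0:ℝ) 1) (htr : t < r')
    (hsub : ∀ s ∈ Set.Ioo t r',
      s ∈ Set.Ioo (0:ℝ) 1 ∧ -(1 / (1 - s)) < ℓ s ∧ ℓ s < 1 / s) :
    Fd ℓ θ r' ≤ Fd ℓ θ t := by
  have hFc : ContinuousOn (Fd ℓ θ) (Set.Ioo 0 1) := F_contOn hℓ.continuousOn hθ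
  have hIcs : Set.Ioc t r' ⊆ Set.Ioo (0:ℝ) 1 := fun s hs =>
    ⟨lt_trans ht.1 hs.1, lt_of_le_of_lt hs.2 hr'.2⟩
  have hanti : AntitoneOn (Fd ℓ θ) (Set.Ioc t r') := by
    apply antitoneOn_of_deriv_nonpos (convex_Ioc t r') (hFc.mono hIcs)
    · rw [interior_Ioc]
      intro s hs
      obtain ⟨hs1, hs2, hs3⟩ := hsub s hs
      exact (F_hasDerivAt_A hℓ hθ hs1 hs2 hs3).differentiableAt.differentiableWithinAt
    · rw [interior_Ioc]
      intro s hs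
      obtain ⟨hs1, hs2, hs3⟩ := hsub s hs
      rw [(F_hasDerivAt_A hℓ hθ hs1 hs2 hs3).deriv]
      have h := hA s hs1 hs2 hs3
      have hG : (0:ℝ) < Ghat ℓ θ s := ghat_pos
      nlinarith
  have h1 : ∀ s ∈ Set.Ioc t r', Fd ℓ θ r' ≤ Fd ℓ θ s := fun s hs =>
    hanti hs ⟨htr, le_rfl⟩ hs.2
  have hct : ContinuousAt (Fd ℓ θ) t := hFc.continuousAt (isOpen_Ioo.mem_nhds ht)
  have htend : Filter.Tendsto (Fd ℓ θ) (𝓝[>] t) (𝓝 (Fd ℓ θ t)) :=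
    hct.continuousWithinAt.tendsto
  exact ge_of_tendsto htend
    (eventually_of_mem (Ioc_mem_nhdsGT_of_mem ⟨le_refl t, htr⟩) h1)

lemma F_anti (hℓ : ContDiffOn ℝ 1 ℓ (Set.Ioo 0 1)) (hθ : θ ∈ Set.Ioo (0:ℝ) 1)
    (hA : ∀ x ∈ Set.Ioo (0:ℝ) 1, -(1 / (1 - x)) < ℓ x → ℓ x < 1 / x → ℓ x ^ 2 + deriv ℓ x ≤ 0) :
    AntitoneOn (Fd ℓ θ) (Set.Ioo 0 1) := by
  have hc := hℓ.continuousOn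
  intro x hx y hy hxy
  rcases eq_or_lt_of_le hxy with rfl | hxy
  · exact le_rfl
  by_contra hcon
  push_neg at hcon
  have hIccsub : Set.Icc x y ⊆ Set.Ioo (0:ℝ) 1 := fun s hs =>
    ⟨lt_of_lt_of_le hx.1 hs.1, lt_of_le_of_lt hs.2 hy.2⟩
  have hFc : ContinuousOn (Fd ℓ θ) (Set.Ioo 0 1) := F_contOn hc hθ
  set S := Set.Icc x y ∩ (Fd ℓ θ) ⁻¹' Set.Iic (Fd ℓ θ x) with hSdef
  have hSne : S.Nonempty := ⟨x, ⟨le_rfl, hxy.le⟩, Set.mem_preimage.2 (Set.mem_Iic.2 le_rfl)⟩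
  have hSclosed : IsClosed S :=
    (hFc.mono hIccsub).preimage_isClosed_of_isClosed isClosed_Icc isClosed_Iic
  have hScpt : IsCompact S :=
    isCompact_Icc.of_isClosed_subset hSclosed Set.inter_subset_left
  set t₁ := sSup S with ht₁def
  have ht₁S : t₁ ∈ S := hScpt.sSup_mem hSne
  obtain ⟨⟨hxt₁, ht₁y⟩, hFt₁⟩ := ht₁S
  have hFt₁' : Fd ℓ θ t₁ ≤ Fd ℓ θ x := hFt₁
  have ht₁mem : t₁ ∈ Set.Ioo (0:ℝ) 1 := hIccsub ⟨hxt₁, ht₁y⟩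
  have ht₁lty : t₁ < y :=
    lt_of_le_of_ne ht₁y fun h => by rw [h] at hFt₁'; linarith
  have hkey : ∀ r, t₁ < r → r ≤ y → Fd ℓ θ x < Fd ℓ θ r := by
    intro r h1 h2
    by_contra h
    push_neg at h
    have hrS : r ∈ S := ⟨⟨le_trans hxt₁ h1.le, h2⟩, h⟩
    have : r ≤ t₁ := le_csSup hScpt.bddAbove hrS
    linarith
  have hclose : ∀ m, t₁ < m → m ≤ y →
      (∀ s ∈ Set.Ioo t₁ m,
        s ∈ Set.Ioo (0:ℝ) 1 ∧ -(1 / (1 - s)) < ℓ s ∧ ℓ s < 1 / s) → False := by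
    intro m hm1 hm2 hsub
    set r' := (t₁ + m) / 2 with hr'def
    have hr'1 : t₁ < r' := by simp only [hr'def]; linarith
    have hr'2 : r' < m := by simp only [hr'def]; linarith
    have hr'mem : r' ∈ Set.Ioo (0:ℝ) 1 :=
      ⟨lt_trans ht₁mem.1 hr'1, lt_of_lt_of_le hr'2 (le_trans hm2 hy.2.le)⟩
    have h1 := key_interval hℓ hθ hA ht₁mem hr'mem hr'1
      (fun s hs => hsub s ⟨hs.1, lt_trans hs.2 hr'2⟩)
    have h2 := hkey r' hr'1 (le_trans hr'2.le hm2)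
    linarith
  rcases le_or_gt (1 / t₁) (ℓ t₁) with hC1 | hC1'
  · -- upper clip at t₁
    have hclip : clipEll ℓ t₁ = 1 / t₁ := clip_eq_upper ht₁mem hC1
    have hFy_le : Fd ℓ θ y ≤ aF ℓ θ y := F_le_a hy
    have haa : aF ℓ θ y ≤ aF ℓ θ t₁ := aF_anti hc hθ ht₁mem hy ht₁lty.le
    have heq : aF ℓ θ t₁ = Fd ℓ θ t₁ := by
      unfold aF Fd
      rw [hclip]
      have : t₁ ≠ 0 := ne_of_gt ht₁mem.1
      field_simp
    linarith
  rcases le_or_gt (ℓ t₁) (-(1 / (1 - t₁))) with hC3 | hC3'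
  · -- lower clip at t₁
    have hclip : clipEll ℓ t₁ = -(1 / (1 - t₁)) := clip_eq_lower ht₁mem hC3
    have ht₁1 : t₁ - 1 ≠ 0 := by have := ht₁mem.2; intro hh; linarith
    have heq : cF ℓ θ t₁ = Fd ℓ θ t₁ := by
      unfold cF Fd
      rw [hclip]
      field_simp
    by_cases hex : ∃ r ∈ Set.Ioc t₁ y, ℓ r ≤ -(1 / (1 - r))
    · obtain ⟨r, hrmem, hrle⟩ := hex
      have hrIoo : r ∈ Set.Ioo (0:ℝ) 1 :=
        ⟨lt_trans ht₁mem.1 hrmem.1, lt_of_le_of_lt hrmem.2 hy.2⟩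
      have hr1 : r - 1 ≠ 0 := by have := hrIoo.2; intro hh; linarith
      have h1 : Fd ℓ θ r = cF ℓ θ r := by
        unfold cF Fd
        rw [clip_eq_lower hrIoo hrle]
        field_simp
      have h2 : cF ℓ θ r ≤ cF ℓ θ t₁ := cF_anti hc hθ ht₁mem hrIoo hrmem.1.le
      have h3 := hkey r hrmem.1 hrmem.2
      linarith
    · push_neg at hex
      set U := {r | r ∈ Set.Ioc t₁ y ∧ 1 / r ≤ ℓ r} with hUdef
      by_cases hU : U.Nonempty
      · set u := sInf U with hudef
        have hbdd : BddBelow U := ⟨t₁, fun r hr => hr.1.1.le⟩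
        have huy : u ≤ y := by
          obtain ⟨r, hr⟩ := hU
          exact le_trans (csInf_le hbdd hr) hr.1.2
        have ht₁u : t₁ ≤ u := le_csInf hU fun r hr => hr.1.1.le
        have ht₁ltu : t₁ < u := by
          rcases eq_or_lt_of_le ht₁u with heq' | h
          swap
          · exact h
          exfalso
          have hgc : ContinuousAt (fun r => ℓ r - 1 / r) t₁ :=
            (hc.continuousAt (isOpen_Ioo.mem_nhds ht₁mem)).sub
              (continuousAt_const.div continuousAt_id (ne_of_gt ht₁mem.1))
          have hg0 : ℓ t₁ - 1 / t₁ < 0 := by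
            have := bnd_lt ht₁mem
            linarith
          have hev : ∀ᶠ r in 𝓝 t₁, ℓ r - 1 / r < 0 :=
            hgc.eventually_lt continuousAt_const hg0
          rw [Metric.eventually_nhds_iff] at hev
          obtain ⟨ε, hε, hball⟩ := hev
          have hlt : sInf U < t₁ + ε := by rw [← hudef, ← heq']; linarith
          obtain ⟨r, hrU, hrlt⟩ := (csInf_lt_iff hbdd hU).1 hlt
          have habs : dist r t₁ < ε := by
            rw [Real.dist_eq, abs_lt]
            constructor
            · linarith [hrU.1.1]
            · linarith
          have := hball habs
          have := hrU.2
          linarith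
        apply hclose u ht₁ltu huy
        intro s hs
        have hsy : s ≤ y := le_trans (lt_of_lt_of_le hs.2 huy).le le_rfl
        have hsIoc : s ∈ Set.Ioc t₁ y := ⟨hs.1, hsy⟩
        refine ⟨⟨lt_trans ht₁mem.1 hs.1, lt_of_le_of_lt hsy hy.2⟩, hex s hsIoc, ?_⟩
        by_contra h
        push_neg at h
        have hsU : s ∈ U := ⟨hsIoc, h⟩
        have := csInf_le hbdd hsU
        linarith [hs.2]
      · apply hclose y ht₁lty le_rfl
        intro s hs
        have hsIoc : s ∈ Set.Ioc t₁ y := ⟨hs.1, hs.2.le⟩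
        refine ⟨⟨lt_trans ht₁mem.1 hs.1, lt_trans hs.2 hy.2⟩, hex s hsIoc, ?_⟩
        by_contra h
        push_neg at h
        exact hU ⟨s, hsIoc, h⟩
  · -- interior case: t₁ ∈ A
    have hev := eventually_A hℓ ht₁mem hC3' hC1'
    rw [Metric.eventually_nhds_iff] at hev
    obtain ⟨ε, hε, hball⟩ := hev
    set m := min (t₁ + ε / 2) y with hmdef
    have hm1 : t₁ < m := lt_min (by linarith) ht₁lty
    apply hclose m hm1 (min_le_right _ _)
    intro s hs
    apply hball
    have hs2 : s < t₁ + ε / 2 := lt_of_lt_of_le hs.2 (min_le_left _ _)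
    rw [Real.dist_eq, abs_lt]
    exact ⟨by linarith [hs.1], by linarith⟩

end Stmt10Aux

open Stmt10Aux Set Filter Topology in
/-- `Ĝ` is concave on `(0,1)` if and only if `ℓ² + ℓ' ≤ 0` on the set
`A = {x ∈ (0,1) : -1/(1-x) < ℓ(x) < 1/x}`. -/
theorem statement10 (ℓ : ℝ → ℝ) (hℓ : ContDiffOn ℝ 1 ℓ (Set.Ioo 0 1))
    (θ : ℝ) (hθ : θ ∈ Set.Ioo (0:ℝ) 1) :
    ConcaveOn ℝ (Set.Ioo 0 1) (Ghat ℓ θ) ↔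
      ∀ x ∈ Set.Ioo (0:ℝ) 1,
        -(1 / (1 - x)) < ℓ x → ℓ x < 1 / x → ℓ x ^ 2 + deriv ℓ x ≤ 0 := by
  have hc := hℓ.continuousOn
  constructor
  · intro hconc x hx h1 h2
    have hdiff : ∀ z ∈ Set.Ioo (0:ℝ) 1, DifferentiableAt ℝ (Ghat ℓ θ) z := fun z hz =>
      (ghat_hasDerivAt hc hθ hz).differentiableAt
    have hanti : AntitoneOn (deriv (Ghat ℓ θ)) (Set.Ioo 0 1) :=
      hconc.antitoneOn_deriv hdiff
    have hD := F_hasDerivAt_A hℓ hθ hx h1 h2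
    have hDG : HasDerivAt (deriv (Ghat ℓ θ)) ((deriv ℓ x + ℓ x ^ 2) * Ghat ℓ θ x) x := by
      apply hD.congr_of_eventuallyEq
      filter_upwards [isOpen_Ioo.mem_nhds hx] with z hz
      exact ((ghat_hasDerivAt hc hθ hz).deriv).symm ▸ rfl
    have hle : (deriv ℓ x + ℓ x ^ 2) * Ghat ℓ θ x ≤ 0 := by
      rw [hasDerivAt_iff_tendsto_slope] at hDG
      have h2' : Filter.Tendsto (slope (deriv (Ghat ℓ θ)) x) (𝓝[>] x)
          (𝓝 ((deriv ℓ x + ℓ x ^ 2) * Ghat ℓ θ x)) :=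
        hDG.mono_left (nhdsWithin_mono x fun z hz => ne_of_gt hz)
      apply le_of_tendsto h2'
      filter_upwards [Ioo_mem_nhdsGT_of_mem ⟨le_rfl, hx.2⟩, self_mem_nhdsWithin]
        with z hz hz'
      have hzx : x < z := hz'
      have hzmem : z ∈ Set.Ioo (0:ℝ) 1 := ⟨lt_trans hx.1 hz.1, hz.2⟩
      have hmono := hanti hx hzmem hzx.le
      rw [slope_def_field]
      exact div_nonpos_iff.2 (Or.inr ⟨by linarith, by linarith⟩)
    have hG : (0:ℝ) < Ghat ℓ θ x := ghat_pos
    nlinarith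
  · intro hA
    apply AntitoneOn.concaveOn_of_deriv (convex_Ioo 0 1) (ghat_contOn hc hθ)
    · rw [interior_Ioo]
      exact fun z hz => (ghat_hasDerivAt hc hθ hz).differentiableAt.differentiableWithinAt
    · rw [interior_Ioo]
      intro p hp q hq hpq
      rw [(ghat_hasDerivAt hc hθ hp).deriv, (ghat_hasDerivAt hc hθ hq).deriv]
      exact F_anti hℓ hθ hA hp hq hpq
end

section
/- Let U ⊆ ℝ^d be open, c : U → ℝ^{d×d} a continuously differentiable field of symmetric matrices, p : U → (0,∞) continuously differentiable, and R : U → (0,∞) twice continuously differentiable. Suppose that c(x) ∇log(R²/p)(x) = div c(x) for every x ∈ U, where (div c)_i := Σ_j ∂_j c_{ij}. Then, writing L f := (1/2) Σ_{i,j} c_{ij} ∂_{ij} f, the vector field p c ∇(log R) satisfies div( p c ∇log R ) = 2 p ∇(log R)ᵀ c ∇(log R) + 2 p L(log R) on U, where the divergence of a vector field V is div V := Σ_i ∂_i V_i. -/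
open scoped BigOperators

/-- The partial derivative `∂_i f (x)`. -/
noncomputable def pd {d : ℕ} (f : (Fin d → ℝ) → ℝ) (i : Fin d) (x : Fin d → ℝ) : ℝ :=
  fderiv ℝ f x (Pi.single i 1)

/-- The second-order operator `L f := (1/2) ∑_{i,j} c_{ij} ∂_{ij} f`. -/
noncomputable def Lop {d : ℕ} (c : Fin d → Fin d → (Fin d → ℝ) → ℝ)
    (f : (Fin d → ℝ) → ℝ) (x : Fin d → ℝ) : ℝ :=
  (1 / 2) * ∑ i, ∑ j, c i j x * pd (pd f j) i x

lemma pd_mul {d : ℕ} {f g : (Fin d → ℝ) → ℝ} {x : Fin d → ℝ}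
    (hf : DifferentiableAt ℝ f x) (hg : DifferentiableAt ℝ g x) (i : Fin d) :
    pd (fun y => f y * g y) i x = pd f i x * g x + f x * pd g i x := by
  unfold pd
  rw [fderiv_fun_mul hf hg]
  simp
  ring

lemma pd_sum {d n : ℕ} {f : Fin n → (Fin d → ℝ) → ℝ} {x : Fin d → ℝ}
    (hf : ∀ j, DifferentiableAt ℝ (f j) x) (i : Fin d) :
    pd (fun y => ∑ j, f j y) i x = ∑ j, pd (f j) i x := by
  unfold pd
  rw [fderiv_fun_sum (fun j _ => hf j)]
  simp

lemma pd_congr {d : ℕ} {f g : (Fin d → ℝ) → ℝ} {x : Fin d → ℝ}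
    (h : f =ᶠ[nhds x] g) (i : Fin d) : pd f i x = pd g i x := by
  unfold pd; rw [h.fderiv_eq]

lemma pd_sub {d : ℕ} {f g : (Fin d → ℝ) → ℝ} {x : Fin d → ℝ}
    (hf : DifferentiableAt ℝ f x) (hg : DifferentiableAt ℝ g x) (i : Fin d) :
    pd (fun y => f y - g y) i x = pd f i x - pd g i x := by
  unfold pd
  rw [fderiv_fun_sub hf hg]
  simp

lemma pd_const_mul {d : ℕ} {f : (Fin d → ℝ) → ℝ} {x : Fin d → ℝ} (a : ℝ)
    (hf : DifferentiableAt ℝ f x) (i : Fin d) :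
    pd (fun y => a * f y) i x = a * pd f i x := by
  unfold pd
  rw [fderiv_const_mul hf]
  simp

lemma pd_log_comp {d : ℕ} {f : (Fin d → ℝ) → ℝ} {x : Fin d → ℝ}
    (hf : DifferentiableAt ℝ f x) (h0 : f x ≠ 0) (i : Fin d) :
    pd (fun y => Real.log (f y)) i x = (f x)⁻¹ * pd f i x := by
  have h : HasFDerivAt (fun y => Real.log (f y)) ((f x)⁻¹ • fderiv ℝ f x) x :=
    (Real.hasDerivAt_log h0).comp_hasFDerivAt x hf.hasFDerivAt
  unfold pd
  rw [h.fderiv]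
  simp

lemma key {d : ℕ} (P : ℝ) (Pv G : Fin d → ℝ) (C H : Fin d → Fin d → ℝ)
    (T : Fin d → Fin d → Fin d → ℝ)
    (hC : ∀ i j, C i j = C j i) (hT : ∀ k i j, T k i j = T k j i)
    (hA : ∀ i, P * ∑ j, T j i j = ∑ j, C i j * (2 * G j * P - Pv j)) :
    ∑ i, (Pv i * (∑ j, C i j * G j) + P * ∑ j, (T i i j * G j + C i j * H i j))
      = 2 * P * (∑ i, ∑ j, G i * C i j * G j)
        + 2 * P * ((1 / 2) * ∑ i, ∑ j, C i j * H i j) := by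
  set A := ∑ i, ∑ j, Pv i * (C i j * G j) with hA'
  set B := ∑ i, ∑ j, P * (T i i j * G j) with hB'
  set D := ∑ i, ∑ j, P * (C i j * H i j) with hD'
  set E := ∑ i, ∑ j, 2 * P * (G i * C i j * G j) with hE'
  have h1 : B = ∑ j, (∑ i, C j i * (2 * G i * P - Pv i)) * G j := by
    rw [hB', Finset.sum_comm]
    refine Finset.sum_congr rfl fun j _ => ?_
    have : ∑ i, P * (T i i j * G j) = (P * ∑ i, T i j i) * G j := by
      rw [Finset.mul_sum, Finset.sum_mul]
      exact Finset.sum_congr rfl fun i _ => by rw [hT i i j]; ring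
    rw [this, hA j]
  have h3 : A + B = E := by
    have hAe : A = ∑ j, ∑ i, Pv i * (C i j * G j) := Finset.sum_comm
    have hEe : E = ∑ j, ∑ i, 2 * P * (G i * C i j * G j) := Finset.sum_comm
    have hBe : B = ∑ j, ∑ i, C j i * (2 * G i * P - Pv i) * G j := by
      rw [h1]
      exact Finset.sum_congr rfl fun j _ => Finset.sum_mul _ _ _
    rw [hAe, hBe, hEe, ← Finset.sum_add_distrib]
    refine Finset.sum_congr rfl fun j _ => ?_
    rw [← Finset.sum_add_distrib]
    refine Finset.sum_congr rfl fun i _ => ?_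
    rw [hC j i]
    ring
  have hL : ∑ i, (Pv i * (∑ j, C i j * G j) + P * ∑ j, (T i i j * G j + C i j * H i j))
      = A + (B + D) := by
    rw [hA', hB', hD', ← Finset.sum_add_distrib, ← Finset.sum_add_distrib]
    refine Finset.sum_congr rfl fun i _ => ?_
    rw [← Finset.sum_add_distrib, ← Finset.sum_add_distrib, Finset.mul_sum, Finset.mul_sum,
      ← Finset.sum_add_distrib]
    exact Finset.sum_congr rfl fun j _ => by ring
  have hR : 2 * P * (∑ i, ∑ j, G i * C i j * G j)
      + 2 * P * ((1 / 2) * ∑ i, ∑ j, C i j * H i j) = E + D := by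
    rw [hE', hD']
    congr 1
    · rw [Finset.mul_sum]
      exact Finset.sum_congr rfl fun i _ => by rw [Finset.mul_sum]
    · have : 2 * P * ((1 / 2) * ∑ i, ∑ j, C i j * H i j)
          = P * ∑ i, ∑ j, C i j * H i j := by ring
      rw [this, Finset.mul_sum]
      exact Finset.sum_congr rfl fun i _ => by rw [Finset.mul_sum]
  rw [hL, hR, ← h3]
  ring

/-- if `c ∇log(R²/p) = div c` on an open set `U` (with `c` a `C¹` symmetric
matrix field, `p > 0` of class `C¹`, `R > 0` of class `C²`), then
`div(p c ∇ log R) = 2 p ∇(log R)ᵀ c ∇(log R) + 2 p L(log R)` on `U`. -/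
theorem statement14 {d : ℕ} (U : Set (Fin d → ℝ)) (hU : IsOpen U)
    (c : Fin d → Fin d → (Fin d → ℝ) → ℝ)
    (hc : ∀ i j, ContDiffOn ℝ 1 (c i j) U)
    (hcsymm : ∀ x ∈ U, ∀ i j, c i j x = c j i x)
    (p : (Fin d → ℝ) → ℝ) (hppos : ∀ x ∈ U, 0 < p x) (hp : ContDiffOn ℝ 1 p U)
    (R : (Fin d → ℝ) → ℝ) (hRpos : ∀ x ∈ U, 0 < R x) (hR : ContDiffOn ℝ 2 R U)
    (hdiv : ∀ x ∈ U, ∀ i,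
      ∑ j, c i j x * pd (fun y => Real.log (R y ^ 2 / p y)) j x
        = ∑ j, pd (c i j) j x) :
    ∀ x ∈ U,
      ∑ i, pd (fun y => p y * ∑ j, c i j y * pd (fun z => Real.log (R z)) j y) i x
        = 2 * p x *
            (∑ i, ∑ j, pd (fun z => Real.log (R z)) i x * c i j x
              * pd (fun z => Real.log (R z)) j x)
          + 2 * p x * Lop c (fun z => Real.log (R z)) x := by
  intro x hx
  have hxU : U ∈ nhds x := hU.mem_nhds hx
  set g : (Fin d → ℝ) → ℝ := fun z => Real.log (R z) with hgdef
  have hpne : p x ≠ 0 := (hppos x hx).ne'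
  -- differentiability facts
  have hpd : DifferentiableAt ℝ p x := (hp.contDiffAt hxU).differentiableAt one_ne_zero
  have hcd : ∀ i j, DifferentiableAt ℝ (c i j) x :=
    fun i j => ((hc i j).contDiffAt hxU).differentiableAt one_ne_zero
  have hg2 : ContDiffOn ℝ 2 g U := hR.log (fun y hy => (hRpos y hy).ne')
  have hg2x : ContDiffAt ℝ 2 g x := hg2.contDiffAt hxU
  have hgd : DifferentiableAt ℝ g x := hg2x.differentiableAt (by norm_num)
  have hGd : ∀ j, DifferentiableAt ℝ (pd g j) x := by
    intro j
    have h1 : ContDiffAt ℝ 1 (fderiv ℝ g) x :=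
      hg2x.fderiv_right (le_of_eq (by norm_num))
    exact ((h1.clm_apply contDiffAt_const).differentiableAt one_ne_zero)
  -- inner sums differentiable
  have hSd : ∀ i, DifferentiableAt ℝ (fun y => ∑ j, c i j y * pd g j y) x := by
    intro i
    exact DifferentiableAt.fun_sum fun j _ => (hcd i j).mul (hGd j)
  -- value of pd of log(R^2/p)
  have hlogeq : ∀ j, pd (fun y => Real.log (R y ^ 2 / p y)) j x
      = 2 * pd g j x - (p x)⁻¹ * pd p j x := by
    intro j
    have heq : (fun y => Real.log (R y ^ 2 / p y))
        =ᶠ[nhds x] fun y => 2 * g y - Real.log (p y) := by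
      filter_upwards [hxU] with y hy
      have hR0 : R y ≠ 0 := (hRpos y hy).ne'
      have hp0 : p y ≠ 0 := (hppos y hy).ne'
      rw [Real.log_div (pow_ne_zero 2 hR0) hp0, Real.log_pow]
      push_cast
      ring
    rw [pd_congr heq j]
    have hlp : DifferentiableAt ℝ (fun y => Real.log (p y)) x :=
      (Real.differentiableAt_log hpne).comp x hpd
    rw [pd_sub (hgd.const_mul 2) hlp j, pd_const_mul 2 hgd j, pd_log_comp hpd hpne j]
  -- transformed divergence hypothesis
  have hA : ∀ i, p x * ∑ j, pd (c i j) j x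
      = ∑ j, c i j x * (2 * pd g j x * p x - pd p j x) := by
    intro i
    rw [← hdiv x hx i, Finset.mul_sum]
    refine Finset.sum_congr rfl fun j _ => ?_
    rw [hlogeq j]
    field_simp
  -- symmetry of derivatives of c
  have hT : ∀ k i j, pd (c i j) k x = pd (c j i) k x := by
    intro k i j
    refine pd_congr ?_ k
    filter_upwards [hxU] with y hy
    exact hcsymm y hy i j
  -- compute the divergence term by term
  have hstep : ∀ i, pd (fun y => p y * ∑ j, c i j y * pd g j y) i x
      = pd p i x * (∑ j, c i j x * pd g j x)
        + p x * ∑ j, (pd (c i j) i x * pd g j x + c i j x * pd (pd g j) i x) := by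
    intro i
    rw [pd_mul hpd (hSd i) i]
    congr 1
    rw [pd_sum (fun j => (hcd i j).fun_mul (hGd j)) i]
    exact congrArg _ (Finset.sum_congr rfl fun j _ => pd_mul (hcd i j) (hGd j) i)
  calc ∑ i, pd (fun y => p y * ∑ j, c i j y * pd g j y) i x
      = ∑ i, (pd p i x * (∑ j, c i j x * pd g j x)
          + p x * ∑ j, (pd (c i j) i x * pd g j x + c i j x * pd (pd g j) i x)) :=
        Finset.sum_congr rfl fun i _ => hstep i
    _ = 2 * p x * (∑ i, ∑ j, pd g i x * c i j x * pd g j x)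
        + 2 * p x * ((1 / 2) * ∑ i, ∑ j, c i j x * pd (pd g j) i x) := by
        exact key (p x) (fun i => pd p i x) (fun j => pd g j x)
          (fun i j => c i j x) (fun i j => pd (pd g j) i x)
          (fun k i j => pd (c i j) k x)
          (fun i j => hcsymm x hx i j) hT hA
    _ = 2 * p x * (∑ i, ∑ j, pd g i x * c i j x * pd g j x) + 2 * p x * Lop c g x := rfl
end

section
/- Let d ≥ 2, a ∈ (0,∞)^d, b ∈ [1,∞)^d with γ_i := a_i + b_i − 1 > 1 for every i, and let α_{ij} ≥ 0 (i ≠ j) with α_{ij} = α_{ji}. Let c be the matrix field on Δ of the tractable class built from g ≡ 1, f_i(t) = t^{b_i} and f_{ij} ≡ α_{ij}; let p(x) := (1/B(a)) ∏_{i=1}^d (x^i)^{a_i − 1}, and u(x) := Σ_{i=1}^d (γ_i / 2) log x^i. Then (1/2) ∫_Δ ∇u(x)ᵀ c(x) ∇u(x) p(x) dx = (1/(8 B(a))) Σ_{i≠j} α_{ij} ( γ_i² B(a + (b_i − 2) e_i + b_j e_j) − γ_i γ_j B(a + (b_i − 1) e_i + (b_j − 1) e_j) ), where e_1,…,e_d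 are the standard basis vectors of ℝ^d. -/
open scoped BigOperators
open MeasureTheory

/-- The Dirichlet-example matrix field (tractable class with `g ≡ 1`, `f_i(t) = t^{bᵢ}`,
`f_{ij} ≡ α_{ij}`): `c_{ij}(x) = -α_{ij} (xⁱ)^{bᵢ} (xʲ)^{bⱼ}` for `i ≠ j` and
`c_{ii}(x) = ∑_{k ≠ i} α_{ik} (xⁱ)^{bᵢ} (x^k)^{b_k}`. -/
noncomputable def cDir {d : ℕ} (b : Fin d → ℝ) (α : Fin d → Fin d → ℝ)
    (i j : Fin d) (x : Fin d → ℝ) : ℝ :=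
  if i = j then
    ∑ k ∈ Finset.univ.filter (fun k => k ≠ i), α i k * x i ^ b i * x k ^ b k
  else -(α i j * x i ^ b i * x j ^ b j)

/-- The generalized Beta function `B(r) = ∏ᵢ Γ(rᵢ) / Γ(∑ᵢ rᵢ)`. -/
noncomputable def genBeta {d : ℕ} (r : Fin d → ℝ) : ℝ :=
  (∏ i, Real.Gamma (r i)) / Real.Gamma (∑ i, r i)

lemma beta_ae_eq {u v : ℝ} :
    ∀ᵐ x : ℝ ∂(volume.restrict (Set.Ioc 0 1)),
      (x:ℂ) ^ ((u:ℂ) - 1) * (1 - (x:ℂ)) ^ ((v:ℂ) - 1)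
        = ((x ^ (u - 1) * (1 - x) ^ (v - 1) : ℝ) : ℂ) := by
  rw [ae_restrict_iff' measurableSet_Ioc]
  filter_upwards with x hx
  have h1 : (0:ℝ) ≤ x := hx.1.le
  have h2 : (0:ℝ) ≤ 1 - x := by linarith [hx.2]
  have e1 : (x:ℂ) ^ ((u:ℂ) - 1) = ((x ^ (u - 1) : ℝ) : ℂ) := by
    rw [show ((u:ℂ) - 1) = ((u - 1 : ℝ) : ℂ) by push_cast; ring, ← Complex.ofReal_cpow h1]
  have e2 : (1 - (x:ℂ)) ^ ((v:ℂ) - 1) = ((((1 - x)) ^ (v - 1) : ℝ) : ℂ) := by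
    rw [show ((v:ℂ) - 1) = ((v - 1 : ℝ) : ℂ) by push_cast; ring,
      show (1 - (x:ℂ)) = (((1 - x : ℝ)) : ℂ) by push_cast; ring, ← Complex.ofReal_cpow h2]
  rw [e1, e2, ← Complex.ofReal_mul]

lemma betaReal_integrableOn {u v : ℝ} (hu : 0 < u) (hv : 0 < v) :
    IntegrableOn (fun x : ℝ => x ^ (u - 1) * (1 - x) ^ (v - 1)) (Set.Ioc 0 1) volume := by
  have h := Complex.betaIntegral_convergent (u := (u:ℂ)) (v := (v:ℂ)) (by simpa) (by simpa)
  have h2 : IntegrableOn (fun x : ℝ => (x:ℂ) ^ ((u:ℂ) - 1) * (1 - (x:ℂ)) ^ ((v:ℂ) - 1))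
      (Set.Ioc 0 1) volume := by
    simpa [Set.uIoc_of_le (zero_le_one (α := ℝ))] using h.1
  exact h2.re.congr ((beta_ae_eq (u:=u) (v:=v)).mono fun x hx => by simpa using congrArg Complex.re hx)

lemma betaReal_value {u v : ℝ} (hu : 0 < u) (hv : 0 < v) :
    ∫ x in Set.Ioc (0:ℝ) 1, x ^ (u - 1) * (1 - x) ^ (v - 1)
      = Real.Gamma u * Real.Gamma v / Real.Gamma (u + v) := by
  have h := Complex.Gamma_mul_Gamma_eq_betaIntegral (s := (u:ℂ)) (t := (v:ℂ)) (by simpa) (by simpa)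
  have hne : Complex.Gamma ((u:ℂ) + v) ≠ 0 := by
    rw [show ((u:ℂ) + v) = ((u + v : ℝ) : ℂ) by push_cast; ring, Complex.Gamma_ofReal]
    exact_mod_cast (Real.Gamma_pos_of_pos (by linarith)).ne'
  have hbeta : Complex.betaIntegral u v = Complex.Gamma u * Complex.Gamma v
      / Complex.Gamma ((u:ℂ) + v) := by
    rw [eq_div_iff hne]; linear_combination -h
  have hint : Complex.betaIntegral u v
      = ((∫ x in Set.Ioc (0:ℝ) 1, x ^ (u - 1) * (1 - x) ^ (v - 1) : ℝ) : ℂ) := by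
    rw [Complex.betaIntegral, intervalIntegral.integral_of_le (zero_le_one (α := ℝ)),
      integral_congr_ae (beta_ae_eq (u:=u) (v:=v))]
    exact integral_ofReal (𝕜 := ℂ)
  rw [hint] at hbeta
  have : ((∫ x in Set.Ioc (0:ℝ) 1, x ^ (u - 1) * (1 - x) ^ (v - 1) : ℝ) : ℂ)
      = ((Real.Gamma u * Real.Gamma v / Real.Gamma (u + v) : ℝ) : ℂ) := by
    have hG : Complex.Gamma ((u:ℂ) + v) = ((Real.Gamma (u + v) : ℝ) : ℂ) := by
      rw [← Complex.ofReal_add, Complex.Gamma_ofReal]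
    rw [hbeta, hG, Complex.Gamma_ofReal, Complex.Gamma_ofReal]; norm_cast
  exact_mod_cast this

/-- auxiliary: the open "corner simplex" `{y > 0, ∑ y < 1}`. -/
def Tset (n : ℕ) : Set (Fin n → ℝ) := {y | (∀ i, 0 < y i) ∧ ∑ i, y i < 1}

noncomputable def mono {n : ℕ} (s : Fin n → ℝ) (t : ℝ) (y : Fin n → ℝ) : ℝ :=
  (∏ i, y i ^ (s i - 1)) * (1 - ∑ i, y i) ^ (t - 1)

lemma measurableSet_Tset (n : ℕ) : MeasurableSet (Tset n) := by
  have h1 : MeasurableSet {y : Fin n → ℝ | ∀ i, 0 < y i} := by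
    rw [Set.setOf_forall]
    exact MeasurableSet.iInter fun i => measurableSet_lt measurable_const (measurable_pi_apply i)
  have h2 : MeasurableSet {y : Fin n → ℝ | ∑ i, y i < 1} :=
    measurableSet_lt (Finset.measurable_sum _ fun i _ => measurable_pi_apply i) measurable_const
  exact h1.inter h2

lemma measurable_mono {n : ℕ} (s : Fin n → ℝ) (t : ℝ) : Measurable (mono s t) := by
  unfold mono; fun_prop

lemma measurableSet_Tc {n : ℕ} (c : ℝ) :
    MeasurableSet {z : Fin n → ℝ | (∀ i, 0 < z i) ∧ ∑ i, z i < c} := by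
  have h1 : MeasurableSet {y : Fin n → ℝ | ∀ i, 0 < y i} := by
    rw [Set.setOf_forall]
    exact MeasurableSet.iInter fun i => measurableSet_lt measurable_const (measurable_pi_apply i)
  have h2 : MeasurableSet {y : Fin n → ℝ | ∑ i, y i < c} :=
    measurableSet_lt (Finset.measurable_sum _ fun i _ => measurable_pi_apply i) measurable_const
  exact h1.inter h2

lemma scaled_lint {n : ℕ} (s' : Fin n → ℝ) (t c : ℝ) (hc : 0 < c) :
    ∫⁻ z, ({z : Fin n → ℝ | (∀ i, 0 < z i) ∧ ∑ i, z i < c}).indicator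
        (fun z => ENNReal.ofReal ((∏ i, z i ^ (s' i - 1)) * (c - ∑ i, z i) ^ (t - 1))) z
      = ENNReal.ofReal (c ^ ((∑ i, s' i) + t - 1)) *
        ∫⁻ z, (Tset n).indicator (fun z => ENNReal.ofReal (mono s' t z)) z := by
  set S : Set (Fin n → ℝ) := {z | (∀ i, 0 < z i) ∧ ∑ i, z i < c} with hS
  set H : (Fin n → ℝ) → ENNReal := S.indicator
      (fun z => ENNReal.ofReal ((∏ i, z i ^ (s' i - 1)) * (c - ∑ i, z i) ^ (t - 1))) with hH
  have hHmeas : Measurable H := by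
    apply Measurable.indicator _ (measurableSet_Tc c)
    apply ENNReal.measurable_ofReal.comp
    fun_prop
  have hfr : (Module.finrank ℝ (Fin n → ℝ)) = n := by
    simp [Module.finrank_pi]
  have hmap : Measure.map (c • ·) (volume : Measure (Fin n → ℝ))
      = ENNReal.ofReal |(c ^ n)⁻¹| • volume := by
    rw [Measure.map_addHaar_smul volume hc.ne', hfr]
  have key : ∫⁻ w, H (c • w) ∂volume = ENNReal.ofReal ((c ^ n)⁻¹) * ∫⁻ z, H z ∂volume := by
    rw [← lintegral_map hHmeas (measurable_const_smul c), hmap, lintegral_smul_measure,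
      abs_of_pos (by positivity), smul_eq_mul]
  -- pointwise identity for H (c • w)
  have hpt : ∀ w : Fin n → ℝ, H (c • w)
      = ENNReal.ofReal (c ^ ((∑ i, s' i) + t - 1 - n)) *
        (Tset n).indicator (fun z => ENNReal.ofReal (mono s' t z)) w := by
    intro w
    have hmem : (c • w ∈ S) ↔ w ∈ Tset n := by
      simp only [hS, Tset, Set.mem_setOf_eq, Pi.smul_apply, smul_eq_mul]
      constructor
      · rintro ⟨h1, h2⟩
        refine ⟨fun i => by nlinarith [h1 i], ?_⟩
        rw [← Finset.mul_sum] at h2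
        nlinarith
      · rintro ⟨h1, h2⟩
        refine ⟨fun i => by nlinarith [h1 i], ?_⟩
        rw [← Finset.mul_sum]
        nlinarith
    by_cases hw : w ∈ Tset n
    · rw [hH, Set.indicator_of_mem (hmem.mpr hw), Set.indicator_of_mem hw]
      have h1 : ∀ i, (0:ℝ) ≤ w i := fun i => (hw.1 i).le
      have h2 : (0:ℝ) ≤ 1 - ∑ i, w i := by linarith [hw.2]
      have e1 : ∀ i, ((c • w) i) ^ (s' i - 1) = c ^ (s' i - 1) * (w i) ^ (s' i - 1) := by
        intro i
        simp only [Pi.smul_apply, smul_eq_mul]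
        rw [Real.mul_rpow hc.le (h1 i)]
      have e2 : ∑ i, (c • w) i = c * ∑ i, w i := by
        simp only [Pi.smul_apply, smul_eq_mul, Finset.mul_sum]
      have e3 : (c - ∑ i, (c • w) i) ^ (t - 1)
          = c ^ (t - 1) * (1 - ∑ i, w i) ^ (t - 1) := by
        rw [e2, show c - c * ∑ i, w i = c * (1 - ∑ i, w i) by ring, Real.mul_rpow hc.le h2]
      have e4 : ∏ i, c ^ (s' i - 1) = c ^ (∑ i, (s' i - 1)) := by
        exact (Real.rpow_sum_of_pos hc _ _).symm
      rw [← ENNReal.ofReal_mul (by positivity)]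
      congr 1
      calc (∏ i, ((c • w) i) ^ (s' i - 1)) * (c - ∑ i, (c • w) i) ^ (t - 1)
          = ((∏ i, c ^ (s' i - 1)) * ∏ i, (w i) ^ (s' i - 1)) *
            (c ^ (t - 1) * (1 - ∑ i, w i) ^ (t - 1)) := by
            rw [e3, ← Finset.prod_mul_distrib]
            congr 1
            exact Finset.prod_congr rfl fun i _ => e1 i
        _ = c ^ ((∑ i, s' i) + t - 1 - n) * mono s' t w := by
            rw [e4, mono]
            rw [show (∑ i, (s' i - 1)) = (∑ i, s' i) - n by
              rw [Finset.sum_sub_distrib]; simp]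
            rw [show ((∑ i, s' i) + t - 1 - n) = ((∑ i, s' i) - n) + (t - 1) by ring,
              Real.rpow_add hc]
            ring
    · rw [hH, Set.indicator_of_notMem (fun h => hw (hmem.mp h)), Set.indicator_of_notMem hw,
        mul_zero]
  calc ∫⁻ z, H z ∂volume
      = ENNReal.ofReal (c ^ n) * ∫⁻ w, H (c • w) ∂volume := by
        rw [key, ← mul_assoc, ← ENNReal.ofReal_mul (by positivity),
          mul_inv_cancel₀ (by positivity), ENNReal.ofReal_one, one_mul]
    _ = ENNReal.ofReal (c ^ ((∑ i, s' i) + t - 1)) *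
        ∫⁻ z, (Tset n).indicator (fun z => ENNReal.ofReal (mono s' t z)) z := by
        simp_rw [hpt]
        rw [lintegral_const_mul _ ((measurable_mono s' t).ennreal_ofReal.indicator
          (measurableSet_Tset n)), ← mul_assoc, ← ENNReal.ofReal_mul (by positivity)]
        congr 2
        rw [← Real.rpow_natCast c n, ← Real.rpow_add hc]
        ring_nf

lemma dirichlet_lint : ∀ (n : ℕ) (s : Fin n → ℝ) (t : ℝ), (∀ i, 0 < s i) → 0 < t →
    ∫⁻ y, (Tset n).indicator (fun y => ENNReal.ofReal (mono s t y)) y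
        ∂(volume : Measure (Fin n → ℝ))
      = ENNReal.ofReal ((∏ i, Real.Gamma (s i)) * Real.Gamma t
          / Real.Gamma ((∑ i, s i) + t)) := by
  intro n
  induction n with
  | zero =>
    intro s t hs ht
    have h0 : ∀ y : Fin 0 → ℝ, (Tset 0).indicator
        (fun y => ENNReal.ofReal (mono s t y)) y = 1 := by
      intro y
      have hy : y ∈ Tset 0 := ⟨fun i => i.elim0, by simp⟩
      rw [Set.indicator_of_mem hy]
      simp [mono]
    simp_rw [h0]
    rw [lintegral_one]
    rw [volume_pi, Measure.pi_empty_univ]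
    simp [div_self (Real.Gamma_pos_of_pos ht).ne']
  | succ n ih =>
    intro s t hs ht
    set s' : Fin n → ℝ := fun i => s i.succ with hs'
    set q : ℝ := (∑ i, s' i) + t with hqdef
    have hs'pos : ∀ i, 0 < s' i := fun i => hs i.succ
    have hsum0 : 0 ≤ ∑ i, s' i := Finset.sum_nonneg fun i _ => (hs'pos i).le
    have hq : 0 < q := by rw [hqdef]; linarith
    set Cn : ℝ := (∏ i, Real.Gamma (s' i)) * Real.Gamma t / Real.Gamma q with hCn
    have hCnpos : 0 < Cn := by
      apply div_pos (mul_pos (Finset.prod_pos fun i _ => Real.Gamma_pos_of_pos (hs'pos i))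
        (Real.Gamma_pos_of_pos ht)) (Real.Gamma_pos_of_pos hq)
    set F : (Fin (n+1) → ℝ) → ENNReal := (Tset (n+1)).indicator
        (fun y => ENNReal.ofReal (mono s t y)) with hF
    have hFmeas : Measurable F :=
      (measurable_mono s t).ennreal_ofReal.indicator (measurableSet_Tset (n+1))
    have hpr := (measurePreserving_piFinSuccAbove
        (fun _ : Fin (n+1) => (volume : Measure ℝ)) 0).symm
    have step1 : ∫⁻ y, F y ∂(volume : Measure (Fin (n+1) → ℝ))
        = ∫⁻ a : ℝ, ∫⁻ z : Fin n → ℝ, F (Fin.cons a z) ∂volume ∂volume := by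
      rw [volume_pi, ← hpr.lintegral_comp hFmeas]
      have hAE : AEMeasurable (fun p : ℝ × (Fin n → ℝ) =>
          F ((MeasurableEquiv.piFinSuccAbove (fun _ => ℝ) 0).symm p))
          ((volume : Measure ℝ).prod (Measure.pi fun _ : Fin n => (volume : Measure ℝ))) := by
        exact (hFmeas.comp
          (MeasurableEquiv.piFinSuccAbove (fun _ => ℝ) 0).symm.measurable).aemeasurable
      rw [lintegral_prod _ hAE]
      simp_rw [MeasurableEquiv.piFinSuccAbove_symm_apply, Fin.insertNthEquiv,
        Fin.insertNth_zero, Equiv.coe_fn_mk, cast_eq]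
      rw [← volume_pi]
    -- membership of cons
    have hconsmem : ∀ (a : ℝ) (z : Fin n → ℝ),
        Fin.cons a z ∈ Tset (n+1) ↔ ((∀ i, 0 < z i) ∧ ∑ i, z i < 1 - a) ∧ 0 < a := by
      intro a z
      constructor
      · rintro ⟨h1, h2⟩
        rw [Fin.sum_cons] at h2
        have ha : 0 < a := by simpa using h1 0
        exact ⟨⟨fun i => by simpa using h1 i.succ, by linarith⟩, ha⟩
      · rintro ⟨⟨h1, h2⟩, ha⟩
        refine ⟨fun i => ?_, ?_⟩
        · refine Fin.cases ?_ ?_ i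
          · simpa using ha
          · intro j; simpa using h1 j
        · rw [Fin.sum_cons]; linarith
    have hinner : ∀ a : ℝ, (∫⁻ z : Fin n → ℝ, F (Fin.cons a z) ∂volume)
        = (Set.Ioo (0:ℝ) 1).indicator
            (fun a => ENNReal.ofReal (a ^ (s 0 - 1) * ((1 - a) ^ (q - 1) * Cn))) a := by
      intro a
      by_cases ha : a ∈ Set.Ioo (0:ℝ) 1
      · have ha0 : 0 < a := ha.1
        have hc : 0 < 1 - a := by have := ha.2; linarith
        have hpt : ∀ z : Fin n → ℝ, F (Fin.cons a z)
            = ENNReal.ofReal (a ^ (s 0 - 1)) *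
              ({z : Fin n → ℝ | (∀ i, 0 < z i) ∧ ∑ i, z i < 1 - a}).indicator
                (fun z => ENNReal.ofReal ((∏ i, z i ^ (s' i - 1))
                  * ((1 - a) - ∑ i, z i) ^ (t - 1))) z := by
          intro z
          by_cases hz : z ∈ {z : Fin n → ℝ | (∀ i, 0 < z i) ∧ ∑ i, z i < 1 - a}
          · rw [hF, Set.indicator_of_mem ((hconsmem a z).mpr ⟨hz, ha0⟩),
              Set.indicator_of_mem hz, ← ENNReal.ofReal_mul (by positivity)]
            congr 1
            rw [mono, Fin.prod_univ_succ, Fin.sum_cons, Fin.cons_zero]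
            simp only [Fin.cons_succ]
            rw [show (1 - (a + ∑ i, z i)) = ((1 - a) - ∑ i, z i) by ring]
            ring
          · rw [hF, Set.indicator_of_notMem (fun h => hz ((hconsmem a z).mp h).1),
              Set.indicator_of_notMem hz, mul_zero]
        simp_rw [hpt]
        rw [lintegral_const_mul _ ((by fun_prop : Measurable (fun z : Fin n → ℝ =>
            ENNReal.ofReal ((∏ i, z i ^ (s' i - 1)) * (1 - a - ∑ i, z i) ^ (t - 1)))).indicator
            (measurableSet_Tc (1 - a)))]
        rw [scaled_lint s' t (1 - a) hc]
        have hTint : ∫⁻ z, (Tset n).indicator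
            (fun z => ENNReal.ofReal (mono s' t z)) z ∂volume = ENNReal.ofReal Cn :=
          ih s' t hs'pos ht
        rw [hTint, Set.indicator_of_mem ha, ← ENNReal.ofReal_mul (by positivity),
          ← ENNReal.ofReal_mul (by positivity)]
      · rw [Set.indicator_of_notMem ha]
        have hz0 : ∀ z : Fin n → ℝ, F (Fin.cons a z) = 0 := by
          intro z
          rw [hF, Set.indicator_of_notMem]
          intro h
          rcases (hconsmem a z).mp h with ⟨⟨h1, h2⟩, ha0⟩
          have : 0 ≤ ∑ i, z i := Finset.sum_nonneg fun i _ => (h1 i).le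
          exact ha ⟨ha0, by linarith⟩
        simp_rw [hz0]
        simp
    rw [step1]
    simp_rw [hinner]
    rw [lintegral_indicator measurableSet_Ioo]
    have hintg : IntegrableOn (fun a : ℝ => a ^ (s 0 - 1) * ((1 - a) ^ (q - 1) * Cn))
        (Set.Ioo 0 1) volume := by
      have := ((betaReal_integrableOn (hs 0) hq).mono_set Set.Ioo_subset_Ioc_self).mul_const Cn
      simpa [mul_assoc, IntegrableOn] using this
    have hnn : 0 ≤ᵐ[volume.restrict (Set.Ioo (0:ℝ) 1)]
        fun a : ℝ => a ^ (s 0 - 1) * ((1 - a) ^ (q - 1) * Cn) := by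
      filter_upwards [ae_restrict_mem measurableSet_Ioo] with x hx
      have h1 : (0:ℝ) < x := hx.1
      have h2 : (0:ℝ) < 1 - x := by have := hx.2; linarith
      positivity
    rw [← ofReal_integral_eq_lintegral_ofReal hintg hnn]
    have : ∫ a in Set.Ioo (0:ℝ) 1, a ^ (s 0 - 1) * ((1 - a) ^ (q - 1) * Cn)
        = (∫ a in Set.Ioc (0:ℝ) 1, a ^ (s 0 - 1) * (1 - a) ^ (q - 1)) * Cn := by
      rw [integral_Ioc_eq_integral_Ioo, ← integral_mul_const]
      congr 1; funext a; ring
    rw [this, betaReal_value (hs 0) hq]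
    congr 1
    rw [hCn, Fin.prod_univ_succ, Fin.sum_univ_succ]
    have hΓq : Real.Gamma q ≠ 0 := (Real.Gamma_pos_of_pos hq).ne'
    have hΓ2 : Real.Gamma (s 0 + q) ≠ 0 :=
      (Real.Gamma_pos_of_pos (by linarith [hs 0])).ne'
    rw [show s 0 + ∑ i : Fin n, s i.succ + t = s 0 + q by rw [hqdef]; ring]
    field_simp
    ring

noncomputable def phiMap (n : ℕ) : (Fin n → ℝ) → (Fin (n+1) → ℝ) :=
  fun y i => if h : (i : ℕ) < n then y ⟨(i : ℕ), h⟩ else 1 - ∑ j, y j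

lemma simplexMeasure_succ (n : ℕ) :
    simplexMeasure (n+1) = Measure.map (phiMap n) volume := rfl

lemma measurable_phiMap (n : ℕ) : Measurable (phiMap n) := by
  apply measurable_pi_lambda
  intro i
  by_cases h : (i : ℕ) < n
  · simp only [phiMap, dif_pos h]
    exact measurable_pi_apply _
  · simp only [phiMap, dif_neg h]
    fun_prop

lemma measurableSet_openSimplex (d : ℕ) : MeasurableSet (openSimplex d) := by
  have h1 : MeasurableSet {y : Fin d → ℝ | ∀ i, 0 < y i} := by
    rw [Set.setOf_forall]
    exact MeasurableSet.iInter fun i => measurableSet_lt measurable_const (measurable_pi_apply i)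
  have h2 : MeasurableSet {y : Fin d → ℝ | ∑ i, y i = 1} :=
    measurableSet_eq_fun (Finset.measurable_sum _ fun i _ => measurable_pi_apply i)
      measurable_const
  exact h1.inter h2

lemma phiMap_apply_castSucc (n : ℕ) (y : Fin n → ℝ) (j : Fin n) :
    phiMap n y (Fin.castSucc j) = y j := by
  have h : ((Fin.castSucc j : Fin (n+1)) : ℕ) < n := j.isLt
  simp only [phiMap, dif_pos h]
  congr 1

lemma phiMap_apply_last (n : ℕ) (y : Fin n → ℝ) :
    phiMap n y (Fin.last n) = 1 - ∑ j, y j := by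
  simp only [phiMap, Fin.val_last]
  rw [dif_neg (lt_irrefl n)]

lemma phiMap_sum (n : ℕ) (y : Fin n → ℝ) : ∑ i, phiMap n y i = 1 := by
  rw [Fin.sum_univ_castSucc]
  simp only [phiMap_apply_last]
  rw [show (∑ j : Fin n, phiMap n y (Fin.castSucc j)) = ∑ j, y j from
    Finset.sum_congr rfl fun j _ => phiMap_apply_castSucc n y j]
  ring

lemma phiMap_preimage (n : ℕ) : (phiMap n) ⁻¹' (openSimplex (n+1)) = Tset n := by
  ext y
  simp only [Set.mem_preimage, openSimplex, Tset, Set.mem_setOf_eq]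
  constructor
  · rintro ⟨h1, _⟩
    refine ⟨fun j => by have := h1 (Fin.castSucc j); rwa [phiMap_apply_castSucc] at this, ?_⟩
    have := h1 (Fin.last n)
    rw [phiMap_apply_last] at this
    linarith
  · rintro ⟨h1, h2⟩
    refine ⟨fun i => ?_, phiMap_sum n y⟩
    refine Fin.lastCases ?_ ?_ i
    · rw [phiMap_apply_last]; linarith
    · intro j; rw [phiMap_apply_castSucc]; exact h1 j

lemma phiMap_prod (n : ℕ) (r : Fin (n+1) → ℝ) (y : Fin n → ℝ) :
    ∏ i, (phiMap n y i) ^ (r i - 1)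
      = mono (fun j => r (Fin.castSucc j)) (r (Fin.last n)) y := by
  rw [Fin.prod_univ_castSucc, mono, phiMap_apply_last]
  congr 1
  exact Finset.prod_congr rfl fun j _ => by rw [phiMap_apply_castSucc]

lemma genBeta_pos {d : ℕ} (hd : 0 < d) {r : Fin d → ℝ} (hr : ∀ i, 0 < r i) :
    0 < genBeta r := by
  have : 0 < ∑ i, r i := Finset.sum_pos (fun i _ => hr i)
    (by have : Nonempty (Fin d) := Fin.pos_iff_nonempty.mp hd; exact Finset.univ_nonempty)
  exact div_pos (Finset.prod_pos fun i _ => Real.Gamma_pos_of_pos (hr i))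
    (Real.Gamma_pos_of_pos this)

lemma dirichlet_setLIntegral (n : ℕ) (r : Fin (n+1) → ℝ) (hr : ∀ i, 0 < r i) :
    ∫⁻ x in openSimplex (n+1), ENNReal.ofReal (∏ i, x i ^ (r i - 1)) ∂(simplexMeasure (n+1))
      = ENNReal.ofReal (genBeta r) := by
  rw [simplexMeasure_succ, setLIntegral_map (measurableSet_openSimplex (n+1))
    ((Finset.measurable_prod _ fun i _ => by fun_prop).ennreal_ofReal) (measurable_phiMap n),
    phiMap_preimage]
  have : ∀ y : Fin n → ℝ, ENNReal.ofReal (∏ i, (phiMap n y i) ^ (r i - 1))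
      = ENNReal.ofReal (mono (fun j => r (Fin.castSucc j)) (r (Fin.last n)) y) := by
    intro y; rw [phiMap_prod]
  simp_rw [this]
  rw [← lintegral_indicator (measurableSet_Tset n),
    dirichlet_lint n _ _ (fun j => hr _) (hr (Fin.last n))]
  congr 1
  rw [genBeta, Fin.prod_univ_castSucc, Fin.sum_univ_castSucc]

lemma dirichlet_integrableOn (n : ℕ) (r : Fin (n+1) → ℝ) (hr : ∀ i, 0 < r i) :
    IntegrableOn (fun x => ∏ i, x i ^ (r i - 1)) (openSimplex (n+1)) (simplexMeasure (n+1)) := by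
  constructor
  · exact ((Finset.measurable_prod Finset.univ
      (fun i _ => by fun_prop)).aestronglyMeasurable :
        AEStronglyMeasurable (fun x : Fin (n+1) → ℝ => ∏ i, x i ^ (r i - 1)) _)
  · rw [hasFiniteIntegral_iff_norm]
    have hae : ∀ᵐ x ∂((simplexMeasure (n+1)).restrict (openSimplex (n+1))),
        ENNReal.ofReal ‖∏ i, x i ^ (r i - 1)‖ = ENNReal.ofReal (∏ i, x i ^ (r i - 1)) := by
      filter_upwards [ae_restrict_mem (measurableSet_openSimplex (n+1))] with x hx
      congr 1
      rw [Real.norm_eq_abs, abs_of_nonneg]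
      exact Finset.prod_nonneg fun i _ => Real.rpow_nonneg (hx.1 i).le _
    rw [lintegral_congr_ae hae, dirichlet_setLIntegral n r hr]
    exact ENNReal.ofReal_lt_top

lemma dirichlet_setIntegral (n : ℕ) (r : Fin (n+1) → ℝ) (hr : ∀ i, 0 < r i) :
    ∫ x in openSimplex (n+1), (∏ i, x i ^ (r i - 1)) ∂(simplexMeasure (n+1)) = genBeta r := by
  rw [integral_eq_lintegral_of_nonneg_ae]
  · rw [dirichlet_setLIntegral n r hr, ENNReal.toReal_ofReal (genBeta_pos n.succ_pos hr).le]
  · filter_upwards [ae_restrict_mem (measurableSet_openSimplex (n+1))] with x hx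
    exact Finset.prod_nonneg fun i _ => Real.rpow_nonneg (hx.1 i).le _
  · exact ((Finset.measurable_prod Finset.univ
      (fun i _ => by fun_prop)).aestronglyMeasurable :
        AEStronglyMeasurable (fun x : Fin (n+1) → ℝ => ∏ i, x i ^ (r i - 1)) _)

/-- explicit value of the growth rate integral in the Dirichlet example,
with `γᵢ = aᵢ + bᵢ - 1`, `∇u(x)ᵢ = γᵢ/(2xⁱ)` and `p` the Dirichlet density:
`(1/2)∫ ∇uᵀ c ∇u p = (1/(8B(a))) ∑_{i≠j} α_{ij}(γᵢ² B(a+(bᵢ-2)eᵢ+bⱼeⱼ)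
  - γᵢγⱼ B(a+(bᵢ-1)eᵢ+(bⱼ-1)eⱼ))`. -/
theorem statement18 {d : ℕ} (hd : 2 ≤ d)
    (a b : Fin d → ℝ) (ha : ∀ i, 0 < a i) (hb : ∀ i, 1 ≤ b i)
    (hγ : ∀ i, 1 < a i + b i - 1)
    (α : Fin d → Fin d → ℝ)
    (hαnn : ∀ i j : Fin d, i ≠ j → 0 ≤ α i j)
    (hαsymm : ∀ i j, α i j = α j i) :
    (1 / 2) * (∫ x in openSimplex d,
        (∑ i, ∑ j, ((a i + b i - 1) / (2 * x i)) * cDir b α i j x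
            * ((a j + b j - 1) / (2 * x j)))
          * ((1 / genBeta a) * ∏ i, x i ^ (a i - 1)) ∂(simplexMeasure d))
      = (1 / (8 * genBeta a)) *
          ∑ i, ∑ j ∈ Finset.univ.filter (fun j => j ≠ i),
            α i j * ((a i + b i - 1) ^ 2 *
                genBeta (fun k => a k + (if k = i then b i - 2 else 0)
                  + (if k = j then b j else 0))
              - (a i + b i - 1) * (a j + b j - 1) *
                genBeta (fun k => a k + (if k = i then b i - 1 else 0)
                  + (if k = j then b j - 1 else 0))) := by
  obtain ⟨n, rfl⟩ : ∃ n, d = n + 1 := ⟨d - 1, by omega⟩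
  set γ : Fin (n+1) → ℝ := fun i => a i + b i - 1 with hγdef
  set B : ℝ := genBeta a with hBdef
  have hBpos : 0 < B := genBeta_pos n.succ_pos ha
  set r1 : Fin (n+1) → Fin (n+1) → Fin (n+1) → ℝ := fun i j k =>
    a k + (if k = i then b i - 2 else 0) + (if k = j then b j else 0) with hr1def
  set r2 : Fin (n+1) → Fin (n+1) → Fin (n+1) → ℝ := fun i j k =>
    a k + (if k = i then b i - 1 else 0) + (if k = j then b j - 1 else 0) with hr2def
  have hr1pos : ∀ i j, j ≠ i → ∀ k, 0 < r1 i j k := by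
    intro i j hij k
    rcases eq_or_ne k i with rfl | hki
    · have hkj : ¬ k = j := fun h => hij h.symm
      have := hγ k; simp [hr1def, hkj]; linarith
    · rcases eq_or_ne k j with rfl | hkj
      · have := ha k; have := hb k; simp [hr1def, hki]; linarith
      · have := ha k; simp only [hr1def, if_neg hki, if_neg hkj]; linarith
  have hr2pos : ∀ i j, j ≠ i → ∀ k, 0 < r2 i j k := by
    intro i j hij k
    rcases eq_or_ne k i with rfl | hki
    · have hkj : ¬ k = j := fun h => hij h.symm
      have := hγ k; simp [hr2def, hkj]; linarith
    · rcases eq_or_ne k j with rfl | hkj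
      · have := hγ k; simp [hr2def, hki]; linarith
      · have := ha k; simp only [hr2def, if_neg hki, if_neg hkj]; linarith
  -- the two product identities
  have hprod : ∀ (x : Fin (n+1) → ℝ), (∀ k, 0 < x k) → ∀ i j, j ≠ i →
      (∏ k, x k ^ (r1 i j k - 1)) = (∏ k, x k ^ (a k - 1)) *
          (x i ^ b i * x j ^ b j) / (x i * x i)
      ∧ (∏ k, x k ^ (r2 i j k - 1)) = (∏ k, x k ^ (a k - 1)) *
          (x i ^ b i * x j ^ b j) / (x i * x j) := by
    intro x hx i j hij
    have hgen : ∀ (c1 c2 : ℝ), (∏ k, x k ^ ((a k + (if k = i then c1 else 0)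
        + (if k = j then c2 else 0)) - 1))
        = (∏ k, x k ^ (a k - 1)) * (x i ^ c1 * x j ^ c2) := by
      intro c1 c2
      have step : ∀ k : Fin (n+1), x k ^ ((a k + (if k = i then c1 else 0)
          + (if k = j then c2 else 0)) - 1)
          = x k ^ (a k - 1) * ((if k = i then x k ^ c1 else 1) *
            (if k = j then x k ^ c2 else 1)) := by
        intro k
        rw [show (a k + (if k = i then c1 else 0) + (if k = j then c2 else 0)) - 1
          = (a k - 1) + ((if k = i then c1 else 0) + (if k = j then c2 else 0)) by ring,
          Real.rpow_add (hx k), Real.rpow_add (hx k)]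
        congr 1
        congr 1 <;> split_ifs <;> simp
      rw [Finset.prod_congr rfl fun k _ => step k, Finset.prod_mul_distrib,
        Finset.prod_mul_distrib, Finset.prod_ite_eq' Finset.univ i (fun k => x k ^ c1),
        Finset.prod_ite_eq' Finset.univ j (fun k => x k ^ c2)]
      simp [mul_assoc]
    constructor
    · rw [hr1def, hgen (b i - 2) (b j)]
      rw [show b i - 2 = b i - 1 - 1 by ring, Real.rpow_sub (hx i), Real.rpow_sub (hx i),
        Real.rpow_one]
      field_simp
    · rw [hr2def, hgen (b i - 1) (b j - 1)]
      rw [Real.rpow_sub (hx i), Real.rpow_sub (hx j), Real.rpow_one, Real.rpow_one]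
      field_simp
  -- pointwise identity of the integrand on the simplex
  have key : ∀ x : Fin (n+1) → ℝ, (∀ k, 0 < x k) →
      (∑ i, ∑ j, (γ i / (2 * x i)) * cDir b α i j x * (γ j / (2 * x j)))
          * ((1 / B) * ∏ i, x i ^ (a i - 1))
        = ∑ i, ∑ j ∈ Finset.univ.filter (fun j => j ≠ i),
            (γ i ^ 2 * α i j / (4 * B) * ∏ k, x k ^ (r1 i j k - 1)
              - γ i * γ j * α i j / (4 * B) * ∏ k, x k ^ (r2 i j k - 1)) := by
    intro x hx
    rw [Finset.sum_mul]
    refine Finset.sum_congr rfl fun i _ => ?_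
    rw [Finset.sum_mul]
    have hsplit : ∀ (f : Fin (n+1) → ℝ), ∑ j, f j
        = f i + ∑ j ∈ Finset.univ.filter (fun j => j ≠ i), f j := by
      intro f
      rw [← Finset.sum_filter_add_sum_filter_not Finset.univ (fun j => j = i) f]
      congr 1
      rw [show Finset.univ.filter (fun j => j = i) = {i} by ext k; simp,
        Finset.sum_singleton]
    rw [hsplit]
    have hdiag : (γ i / (2 * x i)) * cDir b α i i x * (γ i / (2 * x i))
          * ((1 / B) * ∏ k, x k ^ (a k - 1))
        = ∑ j ∈ Finset.univ.filter (fun j => j ≠ i),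
            (γ i / (2 * x i)) * (α i j * x i ^ b i * x j ^ b j) * (γ i / (2 * x i))
              * ((1 / B) * ∏ k, x k ^ (a k - 1)) := by
      rw [cDir, if_pos rfl]
      simp only [Finset.sum_mul, Finset.mul_sum]
    rw [hdiag, ← Finset.sum_add_distrib]
    refine Finset.sum_congr rfl fun j hj => ?_
    have hji : j ≠ i := (Finset.mem_filter.mp hj).2
    have hij : ¬ i = j := fun h => hji h.symm
    obtain ⟨h1, h2⟩ := hprod x hx i j hji
    rw [cDir, if_neg hij, h1, h2]
    have hxi := (hx i).ne'
    have hxj := (hx j).ne'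
    field_simp
    ring
  -- rewrite the integral
  rw [setIntegral_congr_fun (measurableSet_openSimplex (n+1))
    (fun x hx => key x hx.1)]
  have hint1 : ∀ i j, j ≠ i → IntegrableOn
      (fun x : Fin (n+1) → ℝ => γ i ^ 2 * α i j / (4 * B) * ∏ k, x k ^ (r1 i j k - 1))
      (openSimplex (n+1)) (simplexMeasure (n+1)) :=
    fun i j hj => (dirichlet_integrableOn n (r1 i j) (hr1pos i j hj)).const_mul _
  have hint2 : ∀ i j, j ≠ i → IntegrableOn
      (fun x : Fin (n+1) → ℝ => γ i * γ j * α i j / (4 * B) * ∏ k, x k ^ (r2 i j k - 1))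
      (openSimplex (n+1)) (simplexMeasure (n+1)) :=
    fun i j hj => (dirichlet_integrableOn n (r2 i j) (hr2pos i j hj)).const_mul _
  have hsub : ∀ i j, j ≠ i → IntegrableOn
      (fun x : Fin (n+1) → ℝ => γ i ^ 2 * α i j / (4 * B) * ∏ k, x k ^ (r1 i j k - 1)
        - γ i * γ j * α i j / (4 * B) * ∏ k, x k ^ (r2 i j k - 1))
      (openSimplex (n+1)) (simplexMeasure (n+1)) :=
    fun i j hj => (hint1 i j hj).sub (hint2 i j hj)
  have hsum : ∀ i, IntegrableOn
      (fun x : Fin (n+1) → ℝ => ∑ j ∈ Finset.univ.filter (fun j => j ≠ i),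
        (γ i ^ 2 * α i j / (4 * B) * ∏ k, x k ^ (r1 i j k - 1)
          - γ i * γ j * α i j / (4 * B) * ∏ k, x k ^ (r2 i j k - 1)))
      (openSimplex (n+1)) (simplexMeasure (n+1)) :=
    fun i => integrable_finset_sum _ (fun j hj => hsub i j (Finset.mem_filter.mp hj).2)
  rw [integral_finset_sum _ (fun i _ => hsum i)]
  have hval : ∀ i, (∫ x in openSimplex (n+1),
        (∑ j ∈ Finset.univ.filter (fun j => j ≠ i),
          (γ i ^ 2 * α i j / (4 * B) * ∏ k, x k ^ (r1 i j k - 1)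
            - γ i * γ j * α i j / (4 * B) * ∏ k, x k ^ (r2 i j k - 1)))
          ∂(simplexMeasure (n+1)))
      = ∑ j ∈ Finset.univ.filter (fun j => j ≠ i),
          (γ i ^ 2 * α i j / (4 * B) * genBeta (r1 i j)
            - γ i * γ j * α i j / (4 * B) * genBeta (r2 i j)) := by
    intro i
    rw [integral_finset_sum _ (fun j hj => hsub i j (Finset.mem_filter.mp hj).2)]
    refine Finset.sum_congr rfl fun j hj => ?_
    have hji : j ≠ i := (Finset.mem_filter.mp hj).2
    rw [integral_sub (hint1 i j hji) (hint2 i j hji), integral_const_mul, integral_const_mul,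
      dirichlet_setIntegral n (r1 i j) (hr1pos i j hji),
      dirichlet_setIntegral n (r2 i j) (hr2pos i j hji)]
  simp_rw [hval]
  rw [Finset.mul_sum, Finset.mul_sum]
  refine Finset.sum_congr rfl fun i _ => ?_
  rw [Finset.mul_sum, Finset.mul_sum]
  refine Finset.sum_congr rfl fun j hj => ?_
  field_simp
  ring
end

section
/- Let γ₁, γ₂ > 1 and set θ¹ := (γ₁ − 2)/(γ₁ + γ₂ − 2) and θ² := γ₁/(γ₁ + γ₂ − 2). Then the function x ↦ x^{γ₁/2} (1 − x)^{γ₂/2} is concave on the open interval (max(θ¹, 0), min(θ², 1)). -/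
/-- for `γ₁, γ₂ > 1`, with `θ¹ = (γ₁-2)/(γ₁+γ₂-2)` and `θ² = γ₁/(γ₁+γ₂-2)`,
the function `x ↦ x^{γ₁/2} (1-x)^{γ₂/2}` is concave on `(max(θ¹,0), min(θ²,1))`. -/
theorem statement19 (γ₁ γ₂ : ℝ) (h1 : 1 < γ₁) (h2 : 1 < γ₂) :
    ConcaveOn ℝ
      (Set.Ioo (max ((γ₁ - 2) / (γ₁ + γ₂ - 2)) 0) (min (γ₁ / (γ₁ + γ₂ - 2)) 1))
      (fun x : ℝ => x ^ (γ₁ / 2) * (1 - x) ^ (γ₂ / 2)) := by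
  have hs : 0 < γ₁ + γ₂ - 2 := by linarith
  have hmem : ∀ x ∈ Set.Ioo (max ((γ₁ - 2) / (γ₁ + γ₂ - 2)) 0) (min (γ₁ / (γ₁ + γ₂ - 2)) 1),
      0 < x ∧ x < 1 ∧ γ₁ - 2 < x * (γ₁ + γ₂ - 2) ∧ x * (γ₁ + γ₂ - 2) < γ₁ := by
    intro x hx
    obtain ⟨hl, hr⟩ := hx
    have h0 : 0 < x := lt_of_le_of_lt (le_max_right _ _) hl
    have h1' : x < 1 := lt_of_lt_of_le hr (min_le_right _ _)
    have h2' : (γ₁ - 2) / (γ₁ + γ₂ - 2) < x := lt_of_le_of_lt (le_max_left _ _) hl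
    have h3' : x < γ₁ / (γ₁ + γ₂ - 2) := lt_of_lt_of_le hr (min_le_left _ _)
    exact ⟨h0, h1', (div_lt_iff₀ hs).mp h2', (lt_div_iff₀ hs).mp h3'⟩
  refine concaveOn_of_hasDerivWithinAt2_nonpos (f' := fun x =>
      γ₁ / 2 * x ^ (γ₁ / 2 - 1) * (1 - x) ^ (γ₂ / 2)
        + x ^ (γ₁ / 2) * (-1 * (γ₂ / 2) * (1 - x) ^ (γ₂ / 2 - 1)))
    (f'' := fun x =>
      (γ₁ / 2 * ((γ₁ / 2 - 1) * x ^ (γ₁ / 2 - 1 - 1)) * (1 - x) ^ (γ₂ / 2)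
        + γ₁ / 2 * x ^ (γ₁ / 2 - 1) * (-1 * (γ₂ / 2) * (1 - x) ^ (γ₂ / 2 - 1)))
      + (γ₁ / 2 * x ^ (γ₁ / 2 - 1) * (-1 * (γ₂ / 2) * (1 - x) ^ (γ₂ / 2 - 1))
        + x ^ (γ₁ / 2) * (-1 * (γ₂ / 2) * (-1 * (γ₂ / 2 - 1) * (1 - x) ^ (γ₂ / 2 - 1 - 1)))))
    (convex_Ioo _ _) ?_ ?_ ?_ ?_
  · exact ((Real.continuous_rpow_const (by linarith)).mul
      ((continuous_const.sub continuous_id).rpow_const fun x => Or.inr (by linarith))).continuousOn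
  · rw [interior_Ioo]
    intro x hx
    obtain ⟨hx0, hx1, -, -⟩ := hmem x hx
    have hy0 : 0 < 1 - x := by linarith
    have hu : HasDerivAt (fun y : ℝ => y ^ (γ₁ / 2)) (γ₁ / 2 * x ^ (γ₁ / 2 - 1)) x :=
      Real.hasDerivAt_rpow_const (Or.inl hx0.ne')
    have hv : HasDerivAt (fun y : ℝ => (1 - y) ^ (γ₂ / 2))
        (-1 * (γ₂ / 2) * (1 - x) ^ (γ₂ / 2 - 1)) x :=
      ((hasDerivAt_id x).const_sub 1).rpow_const (Or.inl hy0.ne')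
    exact (hu.mul hv).hasDerivWithinAt
  · rw [interior_Ioo]
    intro x hx
    obtain ⟨hx0, hx1, -, -⟩ := hmem x hx
    have hy0 : 0 < 1 - x := by linarith
    have hu : HasDerivAt (fun y : ℝ => y ^ (γ₁ / 2)) (γ₁ / 2 * x ^ (γ₁ / 2 - 1)) x :=
      Real.hasDerivAt_rpow_const (Or.inl hx0.ne')
    have hu' : HasDerivAt (fun y : ℝ => γ₁ / 2 * y ^ (γ₁ / 2 - 1))
        (γ₁ / 2 * ((γ₁ / 2 - 1) * x ^ (γ₁ / 2 - 1 - 1))) x :=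
      (Real.hasDerivAt_rpow_const (Or.inl hx0.ne')).const_mul _
    have hv : HasDerivAt (fun y : ℝ => (1 - y) ^ (γ₂ / 2))
        (-1 * (γ₂ / 2) * (1 - x) ^ (γ₂ / 2 - 1)) x :=
      ((hasDerivAt_id x).const_sub 1).rpow_const (Or.inl hy0.ne')
    have hv' : HasDerivAt (fun y : ℝ => -1 * (γ₂ / 2) * (1 - y) ^ (γ₂ / 2 - 1))
        (-1 * (γ₂ / 2) * (-1 * (γ₂ / 2 - 1) * (1 - x) ^ (γ₂ / 2 - 1 - 1))) x := by
      have := (((hasDerivAt_id x).const_sub 1).rpow_const (p := γ₂ / 2 - 1)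
        (Or.inl hy0.ne')).const_mul (-1 * (γ₂ / 2))
      exact this
    have hterm1 := (hu'.mul hv)
    have hterm2 := (hu.mul hv')
    have := hterm1.add hterm2
    refine HasDerivWithinAt.congr_deriv this.hasDerivWithinAt ?_
    ring
  · rw [interior_Ioo]
    intro x hx
    obtain ⟨hx0, hx1, hA, hB⟩ := hmem x hx
    have hy0 : 0 < 1 - x := by linarith
    have e1 : x ^ (γ₁ / 2 - 1) = x ^ (γ₁ / 2 - 1 - 1) * x := by
      rw [show γ₁ / 2 - 1 = γ₁ / 2 - 1 - 1 + 1 by ring, Real.rpow_add_one hx0.ne']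
      norm_num
    have e2 : x ^ (γ₁ / 2) = x ^ (γ₁ / 2 - 1 - 1) * x * x := by
      rw [show γ₁ / 2 = γ₁ / 2 - 1 - 1 + 1 + 1 by ring, Real.rpow_add_one hx0.ne',
        Real.rpow_add_one hx0.ne']
      norm_num
    have e3 : (1 - x) ^ (γ₂ / 2 - 1) = (1 - x) ^ (γ₂ / 2 - 1 - 1) * (1 - x) := by
      rw [show γ₂ / 2 - 1 = γ₂ / 2 - 1 - 1 + 1 by ring, Real.rpow_add_one hy0.ne']
      norm_num
    have e4 : (1 - x) ^ (γ₂ / 2) = (1 - x) ^ (γ₂ / 2 - 1 - 1) * (1 - x) * (1 - x) := by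
      rw [show γ₂ / 2 = γ₂ / 2 - 1 - 1 + 1 + 1 by ring, Real.rpow_add_one hy0.ne',
        Real.rpow_add_one hy0.ne']
      norm_num
    have hP : 0 ≤ x ^ (γ₁ / 2 - 1 - 1) := Real.rpow_nonneg hx0.le _
    have hQ : 0 ≤ (1 - x) ^ (γ₂ / 2 - 1 - 1) := Real.rpow_nonneg hy0.le _
    simp only [e1, e2, e3, e4]
    nlinarith [mul_nonneg (mul_nonneg hP hQ) (mul_nonneg (by linarith : (0:ℝ) ≤ x * (γ₁ + γ₂ - 2) - (γ₁ - 2)) (by linarith : (0:ℝ) ≤ γ₁ - x * (γ₁ + γ₂ - 2))),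
      mul_nonneg (mul_nonneg (mul_nonneg hP hQ) (mul_nonneg hx0.le hy0.le)) hs.le,
      mul_nonneg (mul_nonneg hP hQ) (mul_nonneg hx0.le hy0.le)]
end
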